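/- arXiv:2405.01860 — 7 statements merged into one kernel-verified Lean document; each statement's English description precedes it below -/
import Mathlib

section
/- For a metric space X, the following five conditions are equivalent: (1) X is injective, i.e. for every metric space A, every subset B ⊆ A, and every 1-Lipschitz map f : B → X there is a 1-Lipschitz map f̄ : A → X extending f; (2) X is a 1-Lipschitz absolute retract, i.e. for every metric space Y and every isometric embedding i : X → Y there exists a 1-Lipschitz map r : Y → X with r(i(x)) = x for all x ∈ X; (3) X is hyperconvex, i.e. for every index set I, every family of points (x_i)_{i∈I} in X and radii (r_i)_{i∈I} in [0,∞) with d_X(x_i,x_j) ≤ r_i + r_j for all i,j ∈ I, the intersection ⋂_{i∈I} B[x_i,r_i] of the closed balls is nonempty; (4) X is metrically convex (for all a,b ∈ X and t ∈ [0,1] there is x ∈ X with d_X(a,x) = t·d_X(a,b) and d_X(x,b) = (1−t)·d_X(a,b)) and X has the binary intersection property (every family of pairwise intersecting closed balls in X has a common point); (5) for every metric space Y and every isometric embedding i : X → Y, every metric space Z, every constant K ≥ 0 and every K-Lipschitz map f : X → Z, there exists a K-Lipschitz map g : Y → Z with g ∘ i = f. -/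
/-- The metric segment `[x,z] = {y : d(x,y) + d(y,z) = d(x,z)}`. -/
def MetricSegment {X : Type*} [MetricSpace X] (x z : X) : Set X :=
  {y | dist x y + dist y z = dist x z}

/-- A metric space is an ℝ-tree if every metric segment `[x,y]` is isometric to the
real interval `[0, d(x,y)]`, and `[x,y] ∩ [y,z] = {y}` implies `d(x,z) = d(x,y) + d(y,z)`. -/
def IsRTree (X : Type*) [MetricSpace X] : Prop :=
  (∀ x y : X, Nonempty ((MetricSegment x y) ≃ᵢ (Set.Icc (0:ℝ) (dist x y)))) ∧
  (∀ x y z : X, MetricSegment x y ∩ MetricSegment y z = {y} →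
    dist x z = dist x y + dist y z)

/-- A metric space `X` is injective if every 1-Lipschitz map into `X` from a subset of a
metric space extends to a 1-Lipschitz map on the whole space. -/
def IsInjectiveMetricSpace (X : Type*) [MetricSpace X] : Prop :=
  ∀ (A : Type) [MetricSpace A] (B : Set A) (f : B → X), LipschitzWith 1 f →
    ∃ g : A → X, LipschitzWith 1 g ∧ ∀ b : B, g b = f b

/-- A metric space is Lipschitz connected if any two points are joined by a Lipschitz
path `f : [0,1] → X`. -/
def LipschitzConnected (X : Type*) [MetricSpace X] : Prop :=
  ∀ x y : X, ∃ f : Set.Icc (0:ℝ) 1 → X, (∃ K : NNReal, LipschitzWith K f) ∧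
    f ⟨0, by norm_num⟩ = x ∧ f ⟨1, by norm_num⟩ = y

/-- The intrinsic metric: the infimum of Lipschitz constants of paths joining `x` and `y`. -/
noncomputable def intrinsicDist {X : Type*} [MetricSpace X] (x y : X) : ℝ :=
  sInf {K : ℝ | 0 ≤ K ∧ ∃ f : Set.Icc (0:ℝ) 1 → X,
    LipschitzWith K.toNNReal f ∧ f ⟨0, by norm_num⟩ = x ∧ f ⟨1, by norm_num⟩ = y}

/-- A metric space is analytic if it is a continuous image of a complete separable
metric space. -/
def IsAnalyticMetricSpace (X : Type*) [MetricSpace X] : Prop :=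
  ∃ (Z : Type) (_ : MetricSpace Z) (_ : CompleteSpace Z)
    (_ : TopologicalSpace.SeparableSpace Z) (g : Z → X),
      Continuous g ∧ Function.Surjective g

/-- `L`-Lipschitz connectedness: any two points `x,y` are joined by an `L`-Lipschitz
path defined on `[0, d(x,y)]`. -/
def LLipschitzConnected (L : NNReal) (Y : Type*) [MetricSpace Y] : Prop :=
  ∀ x y : Y, ∃ f : Set.Icc (0:ℝ) (dist x y) → Y, LipschitzWith L f ∧
    f ⟨0, ⟨le_refl 0, dist_nonneg⟩⟩ = x ∧ f ⟨dist x y, ⟨dist_nonneg, le_refl _⟩⟩ = y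

/-- Hyperconvexity: every family of closed balls with `d(xᵢ,xⱼ) ≤ rᵢ + rⱼ` has a
common point. -/
def Hyperconvex (X : Type*) [MetricSpace X] : Prop :=
  ∀ (I : Type) (x : I → X) (r : I → ℝ), (∀ i, 0 ≤ r i) →
    (∀ i j, dist (x i) (x j) ≤ r i + r j) →
    (⋂ i, Metric.closedBall (x i) (r i)).Nonempty

/-- Metric convexity. -/
def MetricallyConvex (X : Type*) [MetricSpace X] : Prop :=
  ∀ a b : X, ∀ t : ℝ, t ∈ Set.Icc (0:ℝ) 1 →
    ∃ x : X, dist a x = t * dist a b ∧ dist x b = (1 - t) * dist a b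

/-- Binary intersection property: every family of pairwise intersecting closed balls
has a common point. -/
def BinaryIntersectionProperty (X : Type*) [MetricSpace X] : Prop :=
  ∀ (I : Type) (x : I → X) (r : I → ℝ),
    (∀ i j, (Metric.closedBall (x i) (r i) ∩ Metric.closedBall (x j) (r j)).Nonempty) →
    (⋂ i, Metric.closedBall (x i) (r i)).Nonempty




/-- Distance for the one-point extension of a metric space. -/
noncomputable def extDist {X : Type} [MetricSpace X] (h : X → ℝ) : Option X → Option X → ℝ
  | none, none => 0
  | none, some y => h y
  | some y, none => h y
  | some a, some b => dist a b

/-- One-point extension of a metric space: a new point at distance `h y` of each `y`. -/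
noncomputable def extMetric {X : Type} [MetricSpace X] (h : X → ℝ)
    (hpos : ∀ y, 0 < h y)
    (hlip : ∀ a b, h a ≤ h b + dist a b)
    (htri : ∀ a b, dist a b ≤ h a + h b) : MetricSpace (Option X) where
  dist := extDist h
  dist_self := by rintro (_|a) <;> simp [extDist]
  dist_comm := by rintro (_|a) (_|b) <;> simp [extDist, dist_comm]
  dist_triangle := by
    rintro (_|a) (_|b) (_|c) <;> simp only [extDist]
    · simp
    · simp
    · linarith [(hpos b).le]
    · linarith [hlip c b, dist_comm b c]
    · simp
    · exact htri a c
    · linarith [hlip a b]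
    · exact dist_triangle a b c
  eq_of_dist_eq_zero := by
    rintro (_|a) (_|b) h' <;> simp only [extDist] at h'
    · rfl
    · exact absurd h' (hpos b).ne'
    · exact absurd h' (hpos a).ne'
    · simp [eq_of_dist_eq_zero h']

section Impls

variable (X : Type) [MetricSpace X]

theorem my_one_to_two (h1 : IsInjectiveMetricSpace X) :
    ∀ (Y : Type) [MetricSpace Y] (i : X → Y), Isometry i →
      ∃ r : Y → X, LipschitzWith 1 r ∧ ∀ x : X, r (i x) = x := by
  intro Y _ i hi
  have hf : LipschitzWith 1 (fun b : Set.range i => (Set.mem_range.mp b.2).choose) := by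
    apply LipschitzWith.of_dist_le_mul
    intro b b'
    have e1 : i (Set.mem_range.mp b.2).choose = (b : Y) := (Set.mem_range.mp b.2).choose_spec
    have e2 : i (Set.mem_range.mp b'.2).choose = (b' : Y) := (Set.mem_range.mp b'.2).choose_spec
    rw [NNReal.coe_one, one_mul, Subtype.dist_eq]
    refine le_of_eq ?_
    calc dist (Set.mem_range.mp b.2).choose (Set.mem_range.mp b'.2).choose
        = dist (i (Set.mem_range.mp b.2).choose) (i (Set.mem_range.mp b'.2).choose) :=
          (hi.dist_eq _ _).symm
      _ = dist (b : Y) (b' : Y) := by rw [e1, e2]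
  obtain ⟨g, hg, hgb⟩ := h1 Y (Set.range i) _ hf
  refine ⟨g, hg, fun x => ?_⟩
  have hx : (⟨i x, ⟨x, rfl⟩⟩ : Set.range i) = ⟨i x, ⟨x, rfl⟩⟩ := rfl
  have h2 := hgb ⟨i x, ⟨x, rfl⟩⟩
  have h3 : (Set.mem_range.mp (⟨i x, ⟨x, rfl⟩⟩ : Set.range i).2).choose = x :=
    hi.injective (Set.mem_range.mp (⟨i x, ⟨x, rfl⟩⟩ : Set.range i).2).choose_spec
  exact h2.trans h3

theorem my_two_to_three
    (h2 : ∀ (Y : Type) [MetricSpace Y] (i : X → Y), Isometry i →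
      ∃ r : Y → X, LipschitzWith 1 r ∧ ∀ x : X, r (i x) = x) :
    Hyperconvex X := by
  intro I x r hr hd
  have hXne : Nonempty X := by
    by_contra hX
    rw [not_nonempty_iff] at hX
    obtain ⟨ret, -, -⟩ := h2 Unit (fun _ => ()) (by intro a; exact (hX.false a).elim)
    exact hX.false (ret ())
  cases isEmpty_or_nonempty I with
  | inl hI => exact ⟨Classical.arbitrary X, by simp⟩
  | inr hI =>
    set h : X → ℝ := fun y => ⨅ i, (r i + dist y (x i)) with hh
    have hbdd : ∀ y : X, BddBelow (Set.range fun i => r i + dist y (x i)) := fun y =>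
      ⟨0, by rintro - ⟨i, rfl⟩; have := hr i; positivity⟩
    have hle : ∀ (y : X) (i : I), h y ≤ r i + dist y (x i) := fun y i => ciInf_le (hbdd y) i
    by_cases hz : ∃ y, h y ≤ 0
    · obtain ⟨y, hy⟩ := hz
      refine ⟨y, ?_⟩
      simp only [Set.mem_iInter, Metric.mem_closedBall]
      intro j
      have : dist y (x j) - r j ≤ h y := by
        apply le_ciInf
        intro i
        linarith [dist_triangle y (x i) (x j), hd i j]
      linarith
    · push_neg at hz
      have hlip : ∀ a b : X, h a ≤ h b + dist a b := by
        intro a b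
        have : h a - dist a b ≤ h b := by
          apply le_ciInf
          intro i
          linarith [hle a i, dist_triangle a b (x i)]
        linarith
      have htri : ∀ a b : X, dist a b ≤ h a + h b := by
        intro a b
        have key : ∀ i, dist a b - (r i + dist a (x i)) ≤ h b := by
          intro i
          apply le_ciInf
          intro j
          linarith [dist_triangle a (x i) b, dist_triangle (x i) (x j) b, hd i j,
            dist_comm (x j) b]
        have : dist a b - h b ≤ h a := by
          apply le_ciInf
          intro i
          linarith [key i]
        linarith
      letI M : MetricSpace (Option X) := extMetric h hz hlip htri
      have hisom : Isometry (some : X → Option X) := Isometry.of_dist_eq (fun a b => rfl)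
      obtain ⟨ρ, hρ, hρs⟩ := h2 (Option X) some hisom
      refine ⟨ρ none, ?_⟩
      simp only [Set.mem_iInter, Metric.mem_closedBall]
      intro i
      have h1 : dist (ρ none) (ρ (some (x i))) ≤ dist (none : Option X) (some (x i)) := by
        simpa using hρ.dist_le_mul none (some (x i))
      rw [hρs] at h1
      have h2' : dist (none : Option X) (some (x i)) = h (x i) := rfl
      have h3' := hle (x i) i
      rw [dist_self] at h3'
      rw [h2'] at h1
      linarith

theorem my_three_to_one (h3 : Hyperconvex X) : IsInjectiveMetricSpace X := by
  intro A _ B f hf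
  set 𝒢 : Set (Set (A × X)) :=
    {G | (∀ b : B, ((b : A), f b) ∈ G) ∧
      ∀ p ∈ G, ∀ q ∈ G, dist (Prod.snd p) (Prod.snd q) ≤ dist p.1 q.1} with h𝒢
  have hG0 : (Set.range fun b : B => ((b : A), f b)) ∈ 𝒢 := by
    constructor
    · intro b; exact ⟨b, rfl⟩
    · rintro - ⟨b, rfl⟩ - ⟨b', rfl⟩
      simpa [Subtype.dist_eq] using hf.dist_le_mul b b'
  have hzorn : ∀ c ⊆ 𝒢, IsChain (· ⊆ ·) c → c.Nonempty →
      ∃ ub ∈ 𝒢, ∀ s ∈ c, s ⊆ ub := by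
    intro c hc hchain hcne
    refine ⟨⋃₀ c, ⟨?_, ?_⟩, fun s hs => Set.subset_sUnion_of_mem hs⟩
    · intro b
      obtain ⟨s, hs⟩ := hcne
      exact Set.mem_sUnion.mpr ⟨s, hs, (hc hs).1 b⟩
    · intro p hp q hq
      obtain ⟨s, hs, hp⟩ := hp
      obtain ⟨t, ht, hq⟩ := hq
      rcases hchain.total hs ht with hst | hts
      · exact (hc ht).2 p (hst hp) q hq
      · exact (hc hs).2 p hp q (hts hq)
  obtain ⟨m, hm0, hmax⟩ := zorn_subset_nonempty 𝒢 hzorn _ hG0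
  have htot : ∀ a : A, ∃ z : X, (a, z) ∈ m := by
    intro a
    by_contra hcon
    push_neg at hcon
    obtain ⟨z, hzmem⟩ := h3 m (fun p => (p : A × X).2) (fun p => dist a (p : A × X).1)
      (fun p => dist_nonneg)
      (by
        intro p q
        calc dist (p : A × X).2 (q : A × X).2 ≤ dist (p : A × X).1 (q : A × X).1 :=
              hmax.prop.2 _ p.2 _ q.2
          _ ≤ dist (p : A × X).1 a + dist a (q : A × X).1 := dist_triangle _ _ _
          _ = dist a (p : A × X).1 + dist a (q : A × X).1 := by rw [dist_comm])
    simp only [Set.mem_iInter, Metric.mem_closedBall] at hzmem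
    have hnew : insert (a, z) m ∈ 𝒢 := by
      constructor
      · intro b; exact Set.mem_insert_of_mem _ (hmax.prop.1 b)
      · rintro p (rfl | hp) q (rfl | hq)
        · simp
        · simpa [dist_comm] using hzmem ⟨q, hq⟩
        · simpa [dist_comm] using hzmem ⟨p, hp⟩
        · exact hmax.prop.2 p hp q hq
    have h' := hmax.2 hnew (Set.subset_insert _ _)
    exact hcon z (h' (Set.mem_insert _ _))
  choose g hg using htot
  refine ⟨g, ?_, ?_⟩
  · apply LipschitzWith.of_dist_le_mul
    intro a a'
    simpa using hmax.prop.2 _ (hg a) _ (hg a')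
  · intro b
    have h1 := hmax.prop.1 b
    have h2 : dist (g (b : A)) (f b) ≤ 0 := by
      simpa using hmax.prop.2 ((b : A), g (b : A)) (hg (b : A)) ((b : A), f b) h1
    exact dist_le_zero.mp h2

theorem my_three_to_four (h3 : Hyperconvex X) :
    MetricallyConvex X ∧ BinaryIntersectionProperty X := by
  constructor
  · intro a b t ht
    obtain ⟨z, hz⟩ := h3 Bool (fun i => if i then a else b)
      (fun i => if i then t * dist a b else (1 - t) * dist a b)
      (by
        intro i
        cases i <;> simp only [if_true, if_false, Bool.false_eq_true]
        · exact mul_nonneg (by linarith [ht.2]) dist_nonneg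
        · exact mul_nonneg ht.1 dist_nonneg)
      (by
        intro i j
        have h1 := ht.1; have h2 := ht.2; have h3 := dist_nonneg (x := a) (y := b)
        cases i <;> cases j <;>
          simp only [if_true, if_false, Bool.false_eq_true, dist_self, dist_comm b a] <;>
          nlinarith)
    simp only [Set.mem_iInter, Metric.mem_closedBall] at hz
    have hza := hz true
    have hzb := hz false
    simp only [if_true, if_false, Bool.false_eq_true] at hza hzb
    have htr : dist a b ≤ dist a z + dist z b := dist_triangle a z b
    have hsum : t * dist a b + (1 - t) * dist a b = dist a b := by ring
    have hda : dist a z = dist z a := dist_comm a z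
    refine ⟨z, by linarith, by linarith⟩
  · intro I x r hpair
    apply h3 I x r
    · intro i
      obtain ⟨w, hw, -⟩ := hpair i i
      have := Metric.mem_closedBall.mp hw
      linarith [dist_nonneg (x := w) (y := x i)]
    · intro i j
      obtain ⟨w, hw1, hw2⟩ := hpair i j
      have h1 := Metric.mem_closedBall.mp hw1
      have h2 := Metric.mem_closedBall.mp hw2
      calc dist (x i) (x j) ≤ dist (x i) w + dist w (x j) := dist_triangle _ _ _
        _ ≤ r i + r j := by rw [dist_comm (x i) w]; exact add_le_add h1 h2

theorem my_four_to_three (h4 : MetricallyConvex X ∧ BinaryIntersectionProperty X) :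
    Hyperconvex X := by
  obtain ⟨hconv, hbip⟩ := h4
  intro I x r hr hd
  apply hbip I x r
  intro i j
  by_cases hzero : r i + r j ≤ 0
  · have hri : r i = 0 := le_antisymm (by linarith [hr j]) (hr i)
    have hrj : r j = 0 := by linarith [hr i, hr j]
    have hdd : dist (x i) (x j) = 0 := le_antisymm (by simpa [hri, hrj] using hd i j) dist_nonneg
    refine ⟨x i, ?_, ?_⟩
    · simp [Metric.mem_closedBall, hri]
    · rw [Metric.mem_closedBall, hdd, hrj]
  · push_neg at hzero
    set t := r i / (r i + r j) with htdef
    have ht : t ∈ Set.Icc (0:ℝ) 1 := by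
      constructor
      · exact div_nonneg (hr i) hzero.le
      · rw [div_le_one hzero]; linarith [hr j]
    obtain ⟨z, hz1, hz2⟩ := hconv (x i) (x j) t ht
    have h1t : 1 - t = r j / (r i + r j) := by
      rw [htdef, eq_div_iff hzero.ne', sub_mul, div_mul_cancel₀ _ hzero.ne', one_mul]
      ring
    refine ⟨z, ?_, ?_⟩
    · rw [Metric.mem_closedBall, dist_comm, hz1, htdef, div_mul_eq_mul_div,
        div_le_iff₀ hzero]
      exact mul_le_mul_of_nonneg_left (hd i j) (hr i)
    · rw [Metric.mem_closedBall, hz2, h1t, div_mul_eq_mul_div, div_le_iff₀ hzero]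
      exact mul_le_mul_of_nonneg_left (hd i j) (hr j)

theorem my_two_to_five
    (h2 : ∀ (Y : Type) [MetricSpace Y] (i : X → Y), Isometry i →
      ∃ r : Y → X, LipschitzWith 1 r ∧ ∀ x : X, r (i x) = x) :
    ∀ (Y : Type) [MetricSpace Y] (i : X → Y), Isometry i →
      ∀ (Z : Type) [MetricSpace Z] (K : NNReal) (f : X → Z), LipschitzWith K f →
        ∃ g : Y → Z, LipschitzWith K g ∧ g ∘ i = f := by
  intro Y _ i hi Z _ K f hf
  obtain ⟨r, hrl, hri⟩ := h2 Y i hi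
  refine ⟨f ∘ r, by simpa using hf.comp hrl, ?_⟩
  funext x
  simp [Function.comp, hri x]

theorem my_five_to_two
    (h5 : ∀ (Y : Type) [MetricSpace Y] (i : X → Y), Isometry i →
      ∀ (Z : Type) [MetricSpace Z] (K : NNReal) (f : X → Z), LipschitzWith K f →
        ∃ g : Y → Z, LipschitzWith K g ∧ g ∘ i = f) :
    ∀ (Y : Type) [MetricSpace Y] (i : X → Y), Isometry i →
      ∃ r : Y → X, LipschitzWith 1 r ∧ ∀ x : X, r (i x) = x := by
  intro Y _ i hi
  obtain ⟨g, hg, hgi⟩ := h5 Y i hi X 1 id LipschitzWith.id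
  exact ⟨g, hg, fun x => congrFun hgi x⟩

end Impls

/-- Characterizations of injective metric spaces. -/
theorem injective_metric_space_tfae (X : Type) [MetricSpace X] :
    List.TFAE [
      -- (1) X is injective
      IsInjectiveMetricSpace X,
      -- (2) X is a 1-Lipschitz absolute retract
      (∀ (Y : Type) [MetricSpace Y] (i : X → Y), Isometry i →
        ∃ r : Y → X, LipschitzWith 1 r ∧ ∀ x : X, r (i x) = x),
      -- (3) X is hyperconvex
      Hyperconvex X,
      -- (4) X is metrically convex and has the binary intersection property
      MetricallyConvex X ∧ BinaryIntersectionProperty X,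
      -- (5) Lipschitz maps defined on X extend with the same Lipschitz constant
      (∀ (Y : Type) [MetricSpace Y] (i : X → Y), Isometry i →
        ∀ (Z : Type) [MetricSpace Z] (K : NNReal) (f : X → Z), LipschitzWith K f →
          ∃ g : Y → Z, LipschitzWith K g ∧ g ∘ i = f)
    ] := by
  tfae_have 1 → 2 := my_one_to_two X
  tfae_have 2 → 3 := my_two_to_three X
  tfae_have 3 → 1 := my_three_to_one X
  tfae_have 3 → 4 := my_three_to_four X
  tfae_have 4 → 3 := my_four_to_three X
  tfae_have 2 → 5 := my_two_to_five X
  tfae_have 5 → 2 := my_five_to_two X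
  tfae_finish
end

section
/- If a metric space X is metrically convex (for all a,b ∈ X and t ∈ [0,1] there is x ∈ X with d_X(a,x) = t·d_X(a,b) and d_X(x,b) = (1−t)·d_X(a,b)) and has the binary intersection property (every family of pairwise intersecting closed balls in X has a common point), then X is hyperconvex: for every index set I, every family of points (x_i)_{i∈I} in X and radii (r_i)_{i∈I} in [0,∞) with d_X(x_i,x_j) ≤ r_i + r_j for all i,j ∈ I, the intersection ⋂_{i∈I} B[x_i,r_i] of the closed balls is nonempty. -/
/-- Metric convexity together with the binary intersection property implies
hyperconvexity. -/
theorem hyperconvex_of_metricallyConvex_binaryIntersection (X : Type) [MetricSpace X]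
    (hconv : MetricallyConvex X) (hbin : BinaryIntersectionProperty X) :
    Hyperconvex X := by
  intro I x r hr hd
  apply hbin
  intro i j
  rcases eq_or_lt_of_le (add_nonneg (hr i) (hr j)) with hs | hs
  · have hij : dist (x i) (x j) = 0 := le_antisymm ((hd i j).trans hs.symm.le) dist_nonneg
    refine ⟨x i, Metric.mem_closedBall.2 (by simp [hr i]), Metric.mem_closedBall.2 ?_⟩
    rw [hij]; exact hr j
  · set s := r i + r j with hsdef
    have ht : r i / s ∈ Set.Icc (0:ℝ) 1 := by
      constructor
      · exact div_nonneg (hr i) hs.le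
      · rw [div_le_one hs]; linarith [hr j]
    obtain ⟨z, hz1, hz2⟩ := hconv (x i) (x j) (r i / s) ht
    refine ⟨z, Metric.mem_closedBall.2 ?_, Metric.mem_closedBall.2 ?_⟩
    · rw [dist_comm, hz1]
      calc r i / s * dist (x i) (x j) ≤ r i / s * s := by
            apply mul_le_mul_of_nonneg_left (hd i j) ht.1
        _ = r i := by field_simp
    · rw [hz2]
      have : (1 - r i / s) = r j / s := by field_simp; ring
      rw [this]
      calc r j / s * dist (x i) (x j) ≤ r j / s * s := by
            apply mul_le_mul_of_nonneg_left (hd i j) (div_nonneg (hr j) hs.le)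
        _ = r j := by field_simp
end

section
/- For a metric space X, the following conditions are equivalent: (1) X is ℝ-convex, i.e. for all x,z ∈ X the metric segment [x,z] is isometric to the real interval [0, d_X(x,z)]; (2) for all x,y ∈ X there exists a unique set I ⊆ X such that x,y ∈ I and I is isometric to the real interval [0, d_X(x,y)]; (3) for all x,y ∈ X there exists a unique 1-Lipschitz map f : [0, d_X(x,y)] → X with f(0) = x and f(d_X(x,y)) = y. -/
section aux
variable {X : Type*} [MetricSpace X]

/-- A set-equality as an isometry equivalence. -/
def isoSetCongr {s t : Set X} (h : s = t) : s ≃ᵢ t where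
  toEquiv := Equiv.setCongr h
  isometry_toFun := fun _ _ => rfl

/-- Any 1-Lipschitz path from `x` to `y` on `[0, dist x y]` is distance preserving. -/
lemma geo_dist {x y : X} {f : Set.Icc (0:ℝ) (dist x y) → X} (hf : LipschitzWith 1 f)
    (h0 : f ⟨0, ⟨le_refl 0, dist_nonneg⟩⟩ = x)
    (h1 : f ⟨dist x y, ⟨dist_nonneg, le_refl _⟩⟩ = y)
    (s t : Set.Icc (0:ℝ) (dist x y)) : dist (f s) (f t) = |(s:ℝ) - (t:ℝ)| := by
  have hub : ∀ u v : Set.Icc (0:ℝ) (dist x y), dist (f u) (f v) ≤ |(u:ℝ) - (v:ℝ)| := by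
    intro u v
    have := hf.dist_le_mul u v
    simpa [Subtype.dist_eq, Real.dist_eq] using this
  have main : ∀ s t : Set.Icc (0:ℝ) (dist x y), (s:ℝ) ≤ t →
      dist (f s) (f t) = (t:ℝ) - s := by
    intro s t hst
    have hs0 : (0:ℝ) ≤ s := s.2.1
    have htd : (t:ℝ) ≤ dist x y := t.2.2
    have h1'0 := hub ⟨0, ⟨le_refl 0, dist_nonneg⟩⟩ s
    rw [h0] at h1'0
    have h1' : dist x (f s) ≤ |(0:ℝ) - (s:ℝ)| := h1'0
    have h2' := hub s t
    have h3'0 := hub t ⟨dist x y, ⟨dist_nonneg, le_refl _⟩⟩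
    rw [h1] at h3'0
    have h3' : dist (f t) y ≤ |(t:ℝ) - dist x y| := h3'0
    rw [abs_of_nonpos (by linarith), neg_sub] at h1'
    rw [abs_of_nonpos (by linarith), neg_sub] at h2'
    rw [abs_of_nonpos (by linarith), neg_sub] at h3'
    have h5 : dist x y ≤ dist x (f s) + dist (f s) (f t) + dist (f t) y :=
      dist_triangle4 x (f s) (f t) y
    linarith
  rcases le_total (s:ℝ) (t:ℝ) with h | h
  · rw [main s t h, abs_of_nonpos (by linarith), neg_sub]
  · rw [dist_comm, main t s h, abs_of_nonneg (by linarith)]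

/-- The flip `t ↦ d - t` of `[0,d]` as an isometry. -/
def iccFlip (d : ℝ) : Set.Icc (0:ℝ) d ≃ᵢ Set.Icc (0:ℝ) d where
  toFun := fun t => ⟨d - t, ⟨by linarith [t.2.2], by linarith [t.2.1]⟩⟩
  invFun := fun t => ⟨d - t, ⟨by linarith [t.2.2], by linarith [t.2.1]⟩⟩
  left_inv := fun t => by ext; simp
  right_inv := fun t => by ext; simp
  isometry_toFun := Isometry.of_dist_eq fun a b => by
    rw [Subtype.dist_eq, Subtype.dist_eq, Real.dist_eq, Real.dist_eq]
    rw [show (d - (a:ℝ)) - (d - (b:ℝ)) = -((a:ℝ) - b) by ring, abs_neg]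

lemma exists_normalized {x y : X} {I : Set X} (hx : x ∈ I) (hy : y ∈ I)
    (e : I ≃ᵢ Set.Icc (0:ℝ) (dist x y)) :
    ∃ e' : I ≃ᵢ Set.Icc (0:ℝ) (dist x y),
      (e' ⟨x, hx⟩ : ℝ) = 0 ∧ (e' ⟨y, hy⟩ : ℝ) = dist x y := by
  have hd : |(e ⟨x,hx⟩ : ℝ) - (e ⟨y,hy⟩ : ℝ)| = dist x y := by
    have := e.dist_eq ⟨x,hx⟩ ⟨y,hy⟩
    rw [Subtype.dist_eq, Subtype.dist_eq, Real.dist_eq] at this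
    simpa using this
  set a := (e ⟨x,hx⟩ : ℝ) with ha
  set b := (e ⟨y,hy⟩ : ℝ) with hb
  have ha0 : 0 ≤ a := (e ⟨x,hx⟩).2.1
  have had : a ≤ dist x y := (e ⟨x,hx⟩).2.2
  have hb0 : 0 ≤ b := (e ⟨y,hy⟩).2.1
  have hbd : b ≤ dist x y := (e ⟨y,hy⟩).2.2
  rcases abs_cases (a - b) with ⟨h, _⟩ | ⟨h, _⟩
  · -- a - b = dist x y : a = d, b = 0; flip
    rw [h] at hd
    refine ⟨e.trans (iccFlip (dist x y)), ?_, ?_⟩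
    · show dist x y - a = 0; linarith
    · show dist x y - b = dist x y; linarith
  · rw [h] at hd
    exact ⟨e, by linarith, by linarith⟩

end aux

section aux3
variable {X : Type*} [MetricSpace X]

lemma geo_dist' {x y : X} {f : Set.Icc (0:ℝ) (dist x y) → X} (hf : LipschitzWith 1 f)
    (s t : Set.Icc (0:ℝ) (dist x y)) : dist (f s) (f t) ≤ |(s:ℝ) - (t:ℝ)| := by
  have := hf.dist_le_mul s t
  simpa [Subtype.dist_eq, Real.dist_eq] using this

lemma concat_path {x w z : X} (hw : dist x w + dist w z = dist x z)
    (f₁ : Set.Icc (0:ℝ) (dist x w) → X) (hf₁ : LipschitzWith 1 f₁)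
    (h10 : f₁ ⟨0, ⟨le_refl 0, dist_nonneg⟩⟩ = x)
    (h11 : f₁ ⟨dist x w, ⟨dist_nonneg, le_refl _⟩⟩ = w)
    (f₂ : Set.Icc (0:ℝ) (dist w z) → X) (hf₂ : LipschitzWith 1 f₂)
    (h20 : f₂ ⟨0, ⟨le_refl 0, dist_nonneg⟩⟩ = w)
    (h21 : f₂ ⟨dist w z, ⟨dist_nonneg, le_refl _⟩⟩ = z) :
    ∃ g : Set.Icc (0:ℝ) (dist x z) → X, LipschitzWith 1 g ∧
      g ⟨0, ⟨le_refl 0, dist_nonneg⟩⟩ = x ∧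
      g ⟨dist x z, ⟨dist_nonneg, le_refl _⟩⟩ = z ∧
      w ∈ Set.range g := by
  classical
  have hd : dist x z = dist x w + dist w z := hw.symm
  have ha0 : (0:ℝ) ≤ dist x w := dist_nonneg
  have hb0 : (0:ℝ) ≤ dist w z := dist_nonneg
  have mem2 : ∀ t : Set.Icc (0:ℝ) (dist x z), ¬ (t:ℝ) ≤ dist x w →
      (t:ℝ) - dist x w ∈ Set.Icc (0:ℝ) (dist w z) := by
    intro t ht
    push_neg at ht
    have := t.2.2
    exact ⟨by linarith, by linarith⟩
  refine ⟨fun t => if h : (t:ℝ) ≤ dist x w then f₁ ⟨t, ⟨t.2.1, h⟩⟩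
      else f₂ ⟨(t:ℝ) - dist x w, mem2 t h⟩, ?_, ?_, ?_, ?_⟩
  · apply LipschitzWith.of_dist_le_mul
    have key : ∀ s t : Set.Icc (0:ℝ) (dist x z), (s:ℝ) ≤ t →
        dist (if h : (s:ℝ) ≤ dist x w then f₁ ⟨s, ⟨s.2.1, h⟩⟩
              else f₂ ⟨(s:ℝ) - dist x w, mem2 s h⟩)
             (if h : (t:ℝ) ≤ dist x w then f₁ ⟨t, ⟨t.2.1, h⟩⟩
              else f₂ ⟨(t:ℝ) - dist x w, mem2 t h⟩)
          ≤ (t:ℝ) - s := by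
      intro s t hst
      by_cases hsa : (s:ℝ) ≤ dist x w
      · by_cases hta : (t:ℝ) ≤ dist x w
        · rw [dif_pos hsa, dif_pos hta]
          have h' : dist (f₁ ⟨s, ⟨s.2.1, hsa⟩⟩) (f₁ ⟨t, ⟨t.2.1, hta⟩⟩) ≤ |(s:ℝ) - (t:ℝ)| :=
            geo_dist' hf₁ _ _
          rwa [abs_of_nonpos (by linarith), neg_sub] at h'
        · rw [dif_pos hsa, dif_neg hta]
          push_neg at hta
          have hA : dist (f₁ ⟨s, ⟨s.2.1, hsa⟩⟩) w ≤ dist x w - (s:ℝ) := by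
            have h' : dist (f₁ ⟨s, ⟨s.2.1, hsa⟩⟩) (f₁ ⟨dist x w, ⟨dist_nonneg, le_refl _⟩⟩)
                ≤ |(s:ℝ) - dist x w| := geo_dist' hf₁ _ _
            rw [abs_of_nonpos (by linarith), neg_sub] at h'
            rwa [h11] at h'
          have hB : dist w (f₂ ⟨(t:ℝ) - dist x w, mem2 t (not_le.mpr hta)⟩)
              ≤ (t:ℝ) - dist x w := by
            have h' : dist (f₂ ⟨0, ⟨le_refl 0, dist_nonneg⟩⟩)
                (f₂ ⟨(t:ℝ) - dist x w, mem2 t (not_le.mpr hta)⟩)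
                ≤ |(0:ℝ) - ((t:ℝ) - dist x w)| := geo_dist' hf₂ _ _
            rw [abs_of_nonpos (by linarith), neg_sub, sub_zero] at h'
            rwa [h20] at h'
          calc dist _ _
              ≤ dist (f₁ ⟨s, ⟨s.2.1, hsa⟩⟩) w
                + dist w (f₂ ⟨(t:ℝ) - dist x w, mem2 t (not_le.mpr hta)⟩) :=
                dist_triangle _ _ _
            _ ≤ (dist x w - (s:ℝ)) + ((t:ℝ) - dist x w) := add_le_add hA hB
            _ = (t:ℝ) - s := by ring
      · have hta : ¬ (t:ℝ) ≤ dist x w := by push_neg at hsa ⊢; linarith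
        rw [dif_neg hsa, dif_neg hta]
        have h' : dist (f₂ ⟨(s:ℝ) - dist x w, mem2 s hsa⟩) (f₂ ⟨(t:ℝ) - dist x w, mem2 t hta⟩)
            ≤ |((s:ℝ) - dist x w) - ((t:ℝ) - dist x w)| := geo_dist' hf₂ _ _
        rw [abs_of_nonpos (by linarith), neg_sub] at h'
        calc dist (f₂ ⟨(s:ℝ) - dist x w, mem2 s hsa⟩) (f₂ ⟨(t:ℝ) - dist x w, mem2 t hta⟩)
            ≤ ((t:ℝ) - dist x w) - ((s:ℝ) - dist x w) := h'
          _ = (t:ℝ) - s := by ring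
    intro s t
    rw [NNReal.coe_one, one_mul, Subtype.dist_eq, Real.dist_eq]
    rcases le_total (s:ℝ) (t:ℝ) with h | h
    · rw [abs_of_nonpos (by linarith), neg_sub]
      exact key s t h
    · rw [abs_of_nonneg (by linarith), dist_comm]
      exact key t s h
  · simp only [dif_pos ha0]
    exact h10
  · by_cases hbz : dist w z = 0
    · have hwz : w = z := dist_eq_zero.mp hbz
      have hcond : dist x z ≤ dist x w := by rw [hd, hbz, add_zero]
      simp only [dif_pos hcond]
      have heq : (⟨dist x z, ⟨dist_nonneg, hcond⟩⟩ : Set.Icc (0:ℝ) (dist x w))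
          = ⟨dist x w, ⟨dist_nonneg, le_refl _⟩⟩ := by
        apply Subtype.ext
        show dist x z = dist x w
        rw [hd, hbz, add_zero]
      rw [heq, h11, hwz]
    · have hbpos : 0 < dist w z := lt_of_le_of_ne hb0 (Ne.symm hbz)
      have hcond : ¬ dist x z ≤ dist x w := by rw [hd]; push_neg; linarith
      simp only [dif_neg hcond]
      have heq : (⟨dist x z - dist x w, mem2 ⟨dist x z, ⟨dist_nonneg, le_refl _⟩⟩ hcond⟩
            : Set.Icc (0:ℝ) (dist w z)) = ⟨dist w z, ⟨dist_nonneg, le_refl _⟩⟩ := by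
        apply Subtype.ext
        show dist x z - dist x w = dist w z
        rw [hd]; ring
      rw [heq, h21]
  · refine ⟨⟨dist x w, ⟨ha0, by rw [hd]; linarith⟩⟩, ?_⟩
    simp only [dif_pos (le_refl (dist x w))]
    exact h11
end aux3

section aux4
variable {X : Type*} [MetricSpace X]

lemma normalized_dist {x y : X} {I : Set X} (hx : x ∈ I) (hy : y ∈ I)
    (e : I ≃ᵢ Set.Icc (0:ℝ) (dist x y))
    (hex : (e ⟨x, hx⟩ : ℝ) = 0) (hey : (e ⟨y, hy⟩ : ℝ) = dist x y)
    (w : I) : dist x (w : X) = (e w : ℝ) ∧ dist (w : X) y = dist x y - (e w : ℝ) := by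
  have key : ∀ u v : I, dist (u:X) (v:X) = |(e u : ℝ) - (e v : ℝ)| := by
    intro u v
    have := e.dist_eq u v
    rw [Subtype.dist_eq, Subtype.dist_eq, Real.dist_eq] at this
    exact this.symm
  have h1 : dist x (w:X) = |(0:ℝ) - (e w : ℝ)| := by
    have := key ⟨x,hx⟩ w; rwa [hex] at this
  have h2 : dist (w:X) y = |(e w : ℝ) - dist x y| := by
    have := key w ⟨y,hy⟩; rwa [hey] at this
  have hw0 : (0:ℝ) ≤ e w := (e w).2.1
  have hwd : ((e w : ℝ)) ≤ dist x y := (e w).2.2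
  constructor
  · rw [h1, abs_of_nonpos (by linarith), neg_sub, sub_zero]
  · rw [h2, abs_of_nonpos (by linarith), neg_sub]

lemma geodesic_of_normalized {x y : X} {I : Set X} (hx : x ∈ I) (hy : y ∈ I)
    (e : I ≃ᵢ Set.Icc (0:ℝ) (dist x y))
    (hex : (e ⟨x, hx⟩ : ℝ) = 0) (hey : (e ⟨y, hy⟩ : ℝ) = dist x y) :
    ∃ g : Set.Icc (0:ℝ) (dist x y) → X, LipschitzWith 1 g ∧
      g ⟨0, ⟨le_refl 0, dist_nonneg⟩⟩ = x ∧
      g ⟨dist x y, ⟨dist_nonneg, le_refl _⟩⟩ = y ∧ Set.range g = I := by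
  refine ⟨fun t => ((e.symm t : I) : X), ?_, ?_, ?_, ?_⟩
  · exact (isometry_subtype_coe.comp e.symm.isometry).lipschitz
  · have h : e.symm ⟨0, ⟨le_refl 0, dist_nonneg⟩⟩ = ⟨x, hx⟩ := by
      rw [IsometryEquiv.symm_apply_eq]
      exact (Subtype.ext hex.symm : (⟨0, ⟨le_refl 0, dist_nonneg⟩⟩ : Set.Icc (0:ℝ) (dist x y)) = e ⟨x,hx⟩).symm ▸ rfl
    simp only [h]
  · have h : e.symm ⟨dist x y, ⟨dist_nonneg, le_refl _⟩⟩ = ⟨y, hy⟩ := by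
      rw [IsometryEquiv.symm_apply_eq]
      exact Subtype.ext hey.symm
    simp only [h]
  · ext u
    constructor
    · rintro ⟨t, rfl⟩; exact (e.symm t).2
    · intro hu; exact ⟨e ⟨u, hu⟩, by simp⟩
end aux4


/-- Characterizations of ℝ-convex metric spaces. -/
theorem rconvex_tfae (X : Type) [MetricSpace X] :
    List.TFAE [
      -- (1) X is ℝ-convex
      (∀ x z : X, Nonempty ((MetricSegment x z) ≃ᵢ (Set.Icc (0:ℝ) (dist x z)))),
      -- (2) unique isometric copy of [0, d(x,y)] through any two points
      (∀ x y : X, ∃! I : Set X, x ∈ I ∧ y ∈ I ∧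
        Nonempty (I ≃ᵢ (Set.Icc (0:ℝ) (dist x y)))),
      -- (3) unique 1-Lipschitz map [0, d(x,y)] → X joining any two points
      (∀ x y : X, ∃! f : Set.Icc (0:ℝ) (dist x y) → X, LipschitzWith 1 f ∧
        f ⟨0, ⟨le_refl 0, dist_nonneg⟩⟩ = x ∧ f ⟨dist x y, ⟨dist_nonneg, le_refl _⟩⟩ = y)
    ] := by
  tfae_have 1 → 2 := by
    intro h1 x y
    have hx : x ∈ MetricSegment x y := by simp [MetricSegment]
    have hy : y ∈ MetricSegment x y := by simp [MetricSegment]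
    refine ⟨MetricSegment x y, ⟨hx, hy, h1 x y⟩, ?_⟩
    rintro I ⟨hxI, hyI, ⟨e0⟩⟩
    obtain ⟨e, hex, hey⟩ := exists_normalized hxI hyI e0
    obtain ⟨φ0⟩ := h1 x y
    obtain ⟨φ, hφx, hφy⟩ := exists_normalized hx hy φ0
    have hIseg : I ⊆ MetricSegment x y := by
      intro w hw
      obtain ⟨d1, d2⟩ := normalized_dist hxI hyI e hex hey ⟨w, hw⟩
      show dist x w + dist w y = dist x y
      rw [d1, d2]; ring
    apply Set.Subset.antisymm hIseg
    intro u hu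
    set w : I := e.symm (φ ⟨u, hu⟩) with hwdef
    have hwI : (w : X) ∈ I := w.2
    have hwseg : (w : X) ∈ MetricSegment x y := hIseg hwI
    have h1w : dist x (w : X) = (e w : ℝ) := (normalized_dist hxI hyI e hex hey w).1
    have het : e w = φ ⟨u, hu⟩ := by rw [hwdef]; exact e.apply_symm_apply _
    have h2u : dist x u = (φ ⟨u, hu⟩ : ℝ) := (normalized_dist hx hy φ hφx hφy ⟨u, hu⟩).1
    have h3w : dist x (w : X) = (φ ⟨(w : X), hwseg⟩ : ℝ) :=
      (normalized_dist hx hy φ hφx hφy ⟨(w : X), hwseg⟩).1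
    have hφeq : φ ⟨(w : X), hwseg⟩ = φ ⟨u, hu⟩ := by
      apply Subtype.ext
      rw [← h3w, h1w, het]
    have := φ.injective hφeq
    have : (w : X) = u := congrArg Subtype.val this
    rw [← this]
    exact hwI
  tfae_have 2 → 3 := by
    intro h2 x y
    obtain ⟨I, ⟨hxI, hyI, ⟨e0⟩⟩, huniq⟩ := h2 x y
    obtain ⟨e, hex, hey⟩ := exists_normalized hxI hyI e0
    obtain ⟨g, hg, hg0, hg1, hgr⟩ := geodesic_of_normalized hxI hyI e hex hey
    refine ⟨g, ⟨hg, hg0, hg1⟩, ?_⟩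
    rintro f ⟨hf, hf0, hf1⟩
    have hfd := geo_dist hf hf0 hf1
    have hIsof : Isometry f := Isometry.of_dist_eq fun s t => by
      rw [hfd s t, Subtype.dist_eq, Real.dist_eq]
    have hxf : x ∈ Set.range f := ⟨_, hf0⟩
    have hyf : y ∈ Set.range f := ⟨_, hf1⟩
    have hrf : Set.range f = I :=
      huniq (Set.range f) ⟨hxf, hyf, ⟨hIsof.isometryEquivOnRange.symm⟩⟩
    funext t
    have hmem : f t ∈ Set.range g := by rw [hgr, ← hrf]; exact ⟨t, rfl⟩
    obtain ⟨s, hs⟩ := hmem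
    have hgd := geo_dist hg hg0 hg1
    have h1t : dist x (f t) = (t : ℝ) := by
      have h' := hfd ⟨0, ⟨le_refl 0, dist_nonneg⟩⟩ t
      rw [hf0] at h'
      rw [h', show |(0:ℝ) - (t:ℝ)| = |(t:ℝ)| by rw [zero_sub, abs_neg],
        abs_of_nonneg t.2.1]
    have h2s : dist x (g s) = (s : ℝ) := by
      have h' := hgd ⟨0, ⟨le_refl 0, dist_nonneg⟩⟩ s
      rw [hg0] at h'
      rw [h', show |(0:ℝ) - (s:ℝ)| = |(s:ℝ)| by rw [zero_sub, abs_neg],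
        abs_of_nonneg s.2.1]
    have hst : (s : ℝ) = (t : ℝ) := by rw [← h2s, hs, h1t]
    rw [← hs]
    exact congrArg g (Subtype.ext hst)
  tfae_have 3 → 1 := by
    intro h3 x z
    obtain ⟨f, ⟨hf, hf0, hf1⟩, huniq⟩ := h3 x z
    have hfd := geo_dist hf hf0 hf1
    have hIsof : Isometry f := Isometry.of_dist_eq fun s t => by
      rw [hfd s t, Subtype.dist_eq, Real.dist_eq]
    have hkey : MetricSegment x z = Set.range f := by
      apply Set.Subset.antisymm
      · intro w hw
        have hw' : dist x w + dist w z = dist x z := hw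
        obtain ⟨f₁, ⟨hf₁, h10, h11⟩, _⟩ := h3 x w
        obtain ⟨f₂, ⟨hf₂, h20, h21⟩, _⟩ := h3 w z
        obtain ⟨g, hg, hg0, hg1, hwg⟩ := concat_path hw' f₁ hf₁ h10 h11 f₂ hf₂ h20 h21
        have : g = f := huniq g ⟨hg, hg0, hg1⟩
        rw [← this]
        exact hwg
      · intro u hu
        obtain ⟨t, rfl⟩ := hu
        show dist x (f t) + dist (f t) z = dist x z
        have hA : dist x (f t) = (t : ℝ) := by
          have h' := hfd ⟨0, ⟨le_refl 0, dist_nonneg⟩⟩ t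
          rw [hf0] at h'
          rw [h', show |(0:ℝ) - (t:ℝ)| = |(t:ℝ)| by rw [zero_sub, abs_neg],
            abs_of_nonneg t.2.1]
        have hB : dist (f t) z = dist x z - (t : ℝ) := by
          have h' := hfd t ⟨dist x z, ⟨dist_nonneg, le_refl _⟩⟩
          rw [hf1] at h'
          rw [h', abs_of_nonpos (by simpa using sub_nonpos.mpr t.2.2), neg_sub]
        rw [hA, hB]; ring
    exact ⟨(isoSetCongr hkey).trans hIsof.isometryEquivOnRange.symm⟩
  tfae_finish
end

section
/- If a metric space X is ℝ-convex (for all x,z ∈ X the metric segment [x,z] is isometric to the real interval [0, d_X(x,z)]), then for all points x,y,z ∈ X there exists a unique point u ∈ [x,y] ∩ [x,z] such that [x,y] ∩ [x,z] = [x,u]. -/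
lemma segment_self_left {X : Type} [MetricSpace X] (x y : X) : x ∈ MetricSegment x y := by
  simp [MetricSegment]

lemma segment_self_right {X : Type} [MetricSpace X] (x y : X) : y ∈ MetricSegment x y := by
  simp [MetricSegment]

lemma segment_trans {X : Type} [MetricSpace X] {x u y p : X}
    (hu : u ∈ MetricSegment x y) (hp : p ∈ MetricSegment x u) : p ∈ MetricSegment x y := by
  simp only [MetricSegment, Set.mem_setOf_eq] at *
  have h1 : dist x y ≤ dist x p + dist p y := dist_triangle _ _ _
  have h2 : dist p y ≤ dist p u + dist u y := dist_triangle _ _ _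
  linarith

lemma segment_closed {X : Type} [MetricSpace X] (x y : X) : IsClosed (MetricSegment x y) :=
  isClosed_eq (by fun_prop) (by fun_prop)

lemma segment_compact {X : Type} [MetricSpace X] (x y : X)
    (h : Nonempty ((MetricSegment x y) ≃ᵢ (Set.Icc (0:ℝ) (dist x y)))) :
    IsCompact (MetricSegment x y) := by
  obtain ⟨e⟩ := h
  rw [isCompact_iff_compactSpace]
  haveI : CompactSpace (Set.Icc (0:ℝ) (dist x y)) :=
    isCompact_iff_compactSpace.mp isCompact_Icc
  exact e.symm.toHomeomorph.compactSpace

lemma segment_dist_eq {X : Type} [MetricSpace X] (x y : X)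
    (h : Nonempty ((MetricSegment x y) ≃ᵢ (Set.Icc (0:ℝ) (dist x y))))
    {p q : X} (hp : p ∈ MetricSegment x y) (hq : q ∈ MetricSegment x y) :
    dist p q = |dist x p - dist x q| := by
  obtain ⟨e⟩ := h
  have hx : x ∈ MetricSegment x y := segment_self_left x y
  have hy : y ∈ MetricSegment x y := segment_self_right x y
  set a : ℝ := (e ⟨x, hx⟩ : ℝ) with ha
  set b : ℝ := (e ⟨y, hy⟩ : ℝ) with hb
  set cp : ℝ := (e ⟨p, hp⟩ : ℝ) with hcp
  set cq : ℝ := (e ⟨q, hq⟩ : ℝ) with hcq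
  have dxy : |a - b| = dist x y := by
    have := e.dist_eq ⟨x, hx⟩ ⟨y, hy⟩
    rw [Subtype.dist_eq, Subtype.dist_eq, Real.dist_eq] at this
    exact this
  have dxp : |a - cp| = dist x p := by
    have := e.dist_eq ⟨x, hx⟩ ⟨p, hp⟩
    rw [Subtype.dist_eq, Subtype.dist_eq, Real.dist_eq] at this
    exact this
  have dxq : |a - cq| = dist x q := by
    have := e.dist_eq ⟨x, hx⟩ ⟨q, hq⟩
    rw [Subtype.dist_eq, Subtype.dist_eq, Real.dist_eq] at this
    exact this
  have dpq : |cp - cq| = dist p q := by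
    have := e.dist_eq ⟨p, hp⟩ ⟨q, hq⟩
    rw [Subtype.dist_eq, Subtype.dist_eq, Real.dist_eq] at this
    exact this
  have hamem := (e ⟨x, hx⟩).2
  have hbmem := (e ⟨y, hy⟩).2
  have hpmem := (e ⟨p, hp⟩).2
  have hqmem := (e ⟨q, hq⟩).2
  simp only [Set.mem_Icc] at hamem hbmem hpmem hqmem
  -- a is an endpoint of [0, dist x y]
  have hend : a = 0 ∨ a = dist x y := by
    rcases le_total a b with hab | hab
    · left
      rw [abs_of_nonpos (by linarith)] at dxy
      linarith [hbmem.2, hamem.1]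
    · right
      rw [abs_of_nonneg (by linarith)] at dxy
      linarith [hbmem.1, hamem.2]
  rcases hend with h0 | hd
  · rw [h0] at dxp dxq
    rw [abs_of_nonpos (by linarith [hpmem.1])] at dxp
    rw [abs_of_nonpos (by linarith [hqmem.1])] at dxq
    rw [← dpq, ← dxp, ← dxq]
    congr 1
    ring
  · rw [hd] at dxp dxq
    rw [abs_of_nonneg (by linarith [hpmem.2])] at dxp
    rw [abs_of_nonneg (by linarith [hqmem.2])] at dxq
    rw [← dpq, ← dxp, ← dxq]
    rw [abs_sub_comm]
    congr 1
    ring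


/-- In an ℝ-convex metric space, the intersection `[x,y] ∩ [x,z]` of two metric
segments equals `[x,u]` for a unique point `u` of this intersection. -/
theorem rconvex_segment_intersection (X : Type) [MetricSpace X]
    (h : ∀ x z : X, Nonempty ((MetricSegment x z) ≃ᵢ (Set.Icc (0:ℝ) (dist x z)))) :
    ∀ x y z : X, ∃! u : X, u ∈ MetricSegment x y ∩ MetricSegment x z ∧
      MetricSegment x y ∩ MetricSegment x z = MetricSegment x u := by
  intro x y z
  set S := MetricSegment x y ∩ MetricSegment x z with hS
  have hxS : x ∈ S := ⟨segment_self_left x y, segment_self_left x z⟩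
  have hScomp : IsCompact S :=
    (segment_compact x y (h x y)).inter_right (segment_closed x z)
  obtain ⟨u, huS, humax⟩ :=
    hScomp.exists_isMaxOn ⟨x, hxS⟩ ((continuous_const.dist continuous_id).continuousOn
      (s := S) (f := fun p : X => dist x p))
  have hSeq : S = MetricSegment x u := by
    ext p
    constructor
    · intro hpS
      have hd := segment_dist_eq x y (h x y) hpS.1 huS.1
      have hle : dist x p ≤ dist x u := humax hpS
      simp only [MetricSegment, Set.mem_setOf_eq]
      rw [abs_of_nonpos (by linarith)] at hd
      linarith
    · intro hp
      exact ⟨segment_trans huS.1 hp, segment_trans huS.2 hp⟩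
  refine ⟨u, ⟨huS, hSeq⟩, ?_⟩
  rintro v ⟨hvS, hveq⟩
  have hu1 : u ∈ MetricSegment x v := by rw [← hveq]; exact huS
  have hv1 : v ∈ MetricSegment x u := by rw [← hSeq]; exact hvS
  simp only [MetricSegment, Set.mem_setOf_eq] at hu1 hv1
  have : dist u v = 0 := by
    have h1 : dist u v = dist v u := dist_comm u v
    linarith
  have := dist_eq_zero.mp this
  exact this.symm ▸ rfl
end

section
/- Let X be a Lipschitz connected metric space with intrinsic metric d_IX. If a sequence (x_n) in X is Cauchy with respect to d_IX (for every ε > 0 there is N such that d_IX(x_n, x_m) < ε for all n,m ≥ N) and converges to a point x ∈ X with respect to the metric d_X, then d_IX(x_n, x) → 0, i.e. (x_n) converges to x with respect to d_IX as well. -/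
open Set

section Glue

/-- The partition points `1 - (1/2)^k` of `[0,1]`. -/
noncomputable def aseq (k : ℕ) : ℝ := 1 - (1/2 : ℝ)^k

lemma aseq_zero : aseq 0 = 0 := by simp [aseq]

lemma aseq_mono : Monotone aseq := by
  intro j k hjk
  have : (1/2 : ℝ)^k ≤ (1/2)^j := by
    apply pow_le_pow_of_le_one (by norm_num) (by norm_num) hjk
  simp only [aseq]; linarith

lemma aseq_lt_one (k : ℕ) : aseq k < 1 := by
  have : (0:ℝ) < (1/2)^k := by positivity
  simp only [aseq]; linarith

lemma aseq_nonneg (k : ℕ) : 0 ≤ aseq k := by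
  have : (1/2 : ℝ)^k ≤ 1 := pow_le_one₀ (by norm_num) (by norm_num)
  simp only [aseq]; linarith

lemma aseq_succ_sub (k : ℕ) : aseq (k+1) - aseq k = (1/2 : ℝ)^(k+1) := by
  simp only [aseq, pow_succ]; ring

lemma aseq_exists {t : ℝ} (ht : t < 1) : ∃ k : ℕ, t < aseq (k+1) := by
  obtain ⟨n, hn⟩ := exists_pow_lt_of_lt_one (by linarith : (0:ℝ) < 1 - t)
    (by norm_num : (1/2 : ℝ) < 1)
  refine ⟨n, ?_⟩
  have h2 : (1/2 : ℝ)^(n+1) ≤ (1/2)^n :=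
    pow_le_pow_of_le_one (by norm_num) (by norm_num) (by omega)
  simp only [aseq]; linarith

variable {X : Type} [MetricSpace X]

/-- The `k`-th path, rescaled to live on `[aseq k, aseq (k+1)]` and clamped. -/
noncomputable def Fmap (f : ℕ → Set.Icc (0:ℝ) 1 → X) (k : ℕ) (t : ℝ) : X :=
  f k (Set.projIcc 0 1 (by norm_num) ((2:ℝ)^(k+1) * (t - aseq k)))

/-- The concatenated path. -/
noncomputable def gmap (f : ℕ → Set.Icc (0:ℝ) 1 → X) (p : X) (t : ℝ) : X :=
  if ht : t < 1 then Fmap f (Nat.find (aseq_exists ht)) t else p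

lemma Fmap_left (f : ℕ → Set.Icc (0:ℝ) 1 → X) (k : ℕ) {t : ℝ} (ht : t ≤ aseq k) :
    Fmap f k t = f k ⟨0, by norm_num⟩ := by
  have harg : (2:ℝ)^(k+1) * (t - aseq k) ≤ 0 := by
    have : (0:ℝ) < 2^(k+1) := by positivity
    nlinarith
  show f k _ = _
  exact congrArg (f k) (Set.projIcc_of_le_left _ harg)

lemma Fmap_right (f : ℕ → Set.Icc (0:ℝ) 1 → X) (k : ℕ) {t : ℝ} (ht : aseq (k+1) ≤ t) :
    Fmap f k t = f k ⟨1, by norm_num⟩ := by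
  have hd := aseq_succ_sub k
  have hpow : (2:ℝ)^(k+1) * (1/2)^(k+1) = 1 := by
    rw [← mul_pow]; norm_num
  have harg : (1:ℝ) ≤ (2:ℝ)^(k+1) * (t - aseq k) := by
    have h2 : (0:ℝ) < 2^(k+1) := by positivity
    nlinarith
  show f k _ = _
  exact congrArg (f k) (Set.projIcc_of_right_le _ harg)

lemma Fmap_lip {c : ℝ} (hc : 0 < c) (f : ℕ → Set.Icc (0:ℝ) 1 → X) (k : ℕ)
    (hLip : LipschitzWith (c * (1/2:ℝ)^(k+1)).toNNReal (f k)) (s t : ℝ) :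
    dist (Fmap f k s) (Fmap f k t) ≤ c * |s - t| := by
  have h01 : (0:ℝ) ≤ 1 := by norm_num
  have h1 := hLip.dist_le_mul (Set.projIcc 0 1 h01 ((2:ℝ)^(k+1) * (s - aseq k)))
    (Set.projIcc 0 1 h01 ((2:ℝ)^(k+1) * (t - aseq k)))
  have hcoe : ((c * (1/2:ℝ)^(k+1)).toNNReal : ℝ) = c * (1/2)^(k+1) :=
    Real.coe_toNNReal _ (by positivity)
  rw [hcoe] at h1
  have h2 := (LipschitzWith.projIcc h01).dist_le_mul
    ((2:ℝ)^(k+1) * (s - aseq k)) ((2:ℝ)^(k+1) * (t - aseq k))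
  simp only [NNReal.coe_one, one_mul] at h2
  have h3 : dist ((2:ℝ)^(k+1) * (s - aseq k)) ((2:ℝ)^(k+1) * (t - aseq k))
      = 2^(k+1) * |s - t| := by
    rw [Real.dist_eq, ← mul_sub, abs_mul, abs_of_pos (by positivity : (0:ℝ) < 2^(k+1))]
    ring_nf
  have hpow : (1/2:ℝ)^(k+1) * 2^(k+1) = 1 := by rw [← mul_pow]; norm_num
  calc dist (Fmap f k s) (Fmap f k t)
      ≤ c * (1/2)^(k+1) * dist (Set.projIcc 0 1 h01 ((2:ℝ)^(k+1) * (s - aseq k)))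
        (Set.projIcc 0 1 h01 ((2:ℝ)^(k+1) * (t - aseq k))) := h1
    _ ≤ c * (1/2)^(k+1) * (2^(k+1) * |s - t|) := by
        apply mul_le_mul_of_nonneg_left (h2.trans (le_of_eq h3)) (by positivity)
    _ = c * ((1/2)^(k+1) * 2^(k+1)) * |s - t| := by ring
    _ = c * |s - t| := by rw [hpow]; ring

lemma intrinsic_bddBelow (x y : X) :
    BddBelow {K : ℝ | 0 ≤ K ∧ ∃ f : Set.Icc (0:ℝ) 1 → X,
      LipschitzWith K.toNNReal f ∧ f ⟨0, by norm_num⟩ = x ∧ f ⟨1, by norm_num⟩ = y} :=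
  ⟨0, fun _ hK => hK.1⟩

lemma intrinsic_nonempty (h : LipschitzConnected X) (x y : X) :
    Set.Nonempty {K : ℝ | 0 ≤ K ∧ ∃ f : Set.Icc (0:ℝ) 1 → X,
      LipschitzWith K.toNNReal f ∧ f ⟨0, by norm_num⟩ = x ∧ f ⟨1, by norm_num⟩ = y} := by
  obtain ⟨f, ⟨K, hK⟩, h0, h1⟩ := h x y
  exact ⟨(K:ℝ), K.coe_nonneg, f, by rwa [Real.toNNReal_coe], h0, h1⟩

lemma exists_path_of_lt (h : LipschitzConnected X) (x y : X) {b : ℝ}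
    (hb : intrinsicDist x y < b) :
    ∃ K : ℝ, 0 ≤ K ∧ K < b ∧ ∃ f : Set.Icc (0:ℝ) 1 → X,
      LipschitzWith K.toNNReal f ∧ f ⟨0, by norm_num⟩ = x ∧ f ⟨1, by norm_num⟩ = y := by
  obtain ⟨K, hKmem, hKb⟩ := exists_lt_of_csInf_lt (intrinsic_nonempty h x y) hb
  exact ⟨K, hKmem.1, hKb, hKmem.2⟩

lemma glue_le (v : ℕ → X) (p : X) (c : ℝ) (hc : 0 < c)
    (f : ℕ → Set.Icc (0:ℝ) 1 → X)
    (hLip : ∀ k, LipschitzWith (c * (1/2:ℝ)^(k+1)).toNNReal (f k))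
    (hf0 : ∀ k, f k ⟨0, by norm_num⟩ = v k)
    (hf1 : ∀ k, f k ⟨1, by norm_num⟩ = v (k+1))
    (hlim : ∀ δ : ℝ, 0 < δ → ∃ K : ℕ, ∀ k ≥ K, dist (v k) p < δ) :
    intrinsicDist (v 0) p ≤ c := by
  have hdistv : ∀ k, dist (v k) (v (k+1)) ≤ c * (1/2:ℝ)^(k+1) := by
    intro k
    have h1 : v k = Fmap f k (aseq k) := by
      rw [Fmap_left f k le_rfl, hf0]
    have h2 : v (k+1) = Fmap f k (aseq (k+1)) := by
      rw [Fmap_right f k le_rfl, hf1]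
    rw [h1, h2]
    have h3 := Fmap_lip hc f k (hLip k) (aseq k) (aseq (k+1))
    have h4 : |aseq k - aseq (k+1)| = (1/2:ℝ)^(k+1) := by
      have hd := aseq_succ_sub k
      have hp : (0:ℝ) < (1/2:ℝ)^(k+1) := by positivity
      rw [abs_of_nonpos (by linarith)]
      linarith
    rw [h4] at h3; exact h3
  have gEqF : ∀ (s : ℝ) (hs1 : s < 1) (k : ℕ), aseq k ≤ s → s < aseq (k+1) →
      gmap f p s = Fmap f k s := by
    intro s hs1 k h1 h2
    have hfind : Nat.find (aseq_exists hs1) = k := by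
      rw [Nat.find_eq_iff]
      refine ⟨h2, fun j hj hcon => absurd hcon (not_lt.2 ?_)⟩
      exact (aseq_mono (by omega : j+1 ≤ k)).trans h1
    simp only [gmap, dif_pos hs1, hfind]
  have gL : ∀ (k : ℕ) (s : ℝ), 0 ≤ s → s ≤ aseq k →
      dist (gmap f p s) (v k) ≤ c * (aseq k - s) := by
    intro k
    induction k with
    | zero =>
      intro s hs0 hsk
      rw [aseq_zero] at hsk
      have hs : s = 0 := le_antisymm hsk hs0
      subst hs
      have h0 : gmap f p 0 = Fmap f 0 0 := by
        refine gEqF 0 (by norm_num) 0 aseq_zero.le ?_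
        norm_num [aseq]
      rw [h0, Fmap_left f 0 aseq_zero.ge, hf0]
      simp [aseq_zero]
    | succ k ih =>
      intro s hs0 hsk
      rcases lt_or_ge s (aseq k) with hlt | hge
      · calc dist (gmap f p s) (v (k+1))
            ≤ dist (gmap f p s) (v k) + dist (v k) (v (k+1)) := dist_triangle _ _ _
          _ ≤ c * (aseq k - s) + c * (1/2:ℝ)^(k+1) := add_le_add (ih s hs0 hlt.le) (hdistv k)
          _ = c * (aseq (k+1) - s) := by linear_combination (-c) * (aseq_succ_sub k)
      · rcases eq_or_lt_of_le hsk with heq | hlt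
        · have h0 : gmap f p s = Fmap f (k+1) s := by
            refine gEqF s ((heq.le).trans_lt (aseq_lt_one (k+1))) (k+1) heq.ge ?_
            calc s = aseq (k+1) := heq
              _ < aseq (k+2) := by
                  have := aseq_succ_sub (k+1)
                  have hp : (0:ℝ) < (1/2:ℝ)^(k+2) := by positivity
                  linarith
          rw [h0, Fmap_left f (k+1) heq.le, hf0]
          simp [heq]
        · have h0 : gmap f p s = Fmap f k s :=
            gEqF s (hlt.trans (aseq_lt_one (k+1))) k hge hlt
          have h1 : v (k+1) = Fmap f k (aseq (k+1)) := by
            rw [Fmap_right f k le_rfl, hf1]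
          rw [h0, h1]
          have h3 := Fmap_lip hc f k (hLip k) s (aseq (k+1))
          rwa [abs_of_nonpos (by linarith), neg_sub] at h3
  have haK : ∀ {t : ℝ} (ht1 : t < 1), 0 ≤ t → aseq (Nat.find (aseq_exists ht1)) ≤ t := by
    intro t ht1 ht0
    rcases Nat.eq_zero_or_pos (Nat.find (aseq_exists ht1)) with h0 | hpos
    · rw [h0, aseq_zero]; exact ht0
    · have hm := Nat.find_min (aseq_exists ht1)
        (show Nat.find (aseq_exists ht1) - 1 < Nat.find (aseq_exists ht1) by omega)
      rw [show Nat.find (aseq_exists ht1) - 1 + 1 = Nat.find (aseq_exists ht1) by omega] at hm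
      exact not_lt.1 hm
  have gM : ∀ s t : ℝ, 0 ≤ s → s ≤ t → t < 1 →
      dist (gmap f p s) (gmap f p t) ≤ c * (t - s) := by
    intro s t hs0 hst ht1
    have hs1 : s < 1 := lt_of_le_of_lt hst ht1
    have hkst : Nat.find (aseq_exists hs1) ≤ Nat.find (aseq_exists ht1) :=
      Nat.find_mono (fun n hn => lt_of_le_of_lt hst hn)
    have hakt : aseq (Nat.find (aseq_exists ht1)) ≤ t := haK ht1 (hs0.trans hst)
    have hgt : gmap f p t = Fmap f (Nat.find (aseq_exists ht1)) t :=
      gEqF t ht1 _ hakt (Nat.find_spec (aseq_exists ht1))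
    rcases eq_or_lt_of_le hkst with heq | hlt
    · have haks : aseq (Nat.find (aseq_exists hs1)) ≤ s := haK hs1 hs0
      have hgs : gmap f p s = Fmap f (Nat.find (aseq_exists hs1)) s :=
        gEqF s hs1 _ haks (Nat.find_spec (aseq_exists hs1))
      rw [hgs, hgt, ← heq]
      have h3 := Fmap_lip hc f (Nat.find (aseq_exists hs1)) (hLip _) s t
      rwa [abs_of_nonpos (by linarith), neg_sub] at h3
    · have hsk : s ≤ aseq (Nat.find (aseq_exists ht1)) :=
        le_trans (le_of_lt (Nat.find_spec (aseq_exists hs1))) (aseq_mono (by omega))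
      have h1 : v (Nat.find (aseq_exists ht1)) = Fmap f (Nat.find (aseq_exists ht1))
          (aseq (Nat.find (aseq_exists ht1))) := by
        rw [Fmap_left f _ le_rfl, hf0]
      calc dist (gmap f p s) (gmap f p t)
          ≤ dist (gmap f p s) (v (Nat.find (aseq_exists ht1)))
            + dist (v (Nat.find (aseq_exists ht1))) (gmap f p t) := dist_triangle _ _ _
        _ ≤ c * (aseq (Nat.find (aseq_exists ht1)) - s)
            + c * (t - aseq (Nat.find (aseq_exists ht1))) := by
            refine add_le_add (gL _ s hs0 hsk) ?_
            rw [hgt, h1]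
            have h3 := Fmap_lip hc f (Nat.find (aseq_exists ht1)) (hLip _) (aseq (Nat.find (aseq_exists ht1))) t
            rwa [abs_of_nonpos (by linarith), neg_sub] at h3
        _ = c * (t - s) := by ring
  have gFull : ∀ s t : ℝ, 0 ≤ s → s ≤ t → t ≤ 1 →
      dist (gmap f p s) (gmap f p t) ≤ c * (t - s) := by
    intro s t hs0 hst ht1
    rcases lt_or_eq_of_le ht1 with ht1' | rfl
    · exact gM s t hs0 hst ht1'
    · have hgt : gmap f p 1 = p := by simp [gmap]
      rcases lt_or_eq_of_le hst with hs1 | rfl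
      · rw [hgt]
        refine le_of_forall_pos_le_add (fun δ hδ => ?_)
        obtain ⟨K, hK⟩ := hlim δ hδ
        obtain ⟨k0, hk0⟩ := aseq_exists hs1
        set k := max (k0+1) K with hk
        have hsk : s ≤ aseq k := le_of_lt (hk0.trans_le (aseq_mono (le_max_left _ _)))
        calc dist (gmap f p s) p
            ≤ dist (gmap f p s) (v k) + dist (v k) p := dist_triangle _ _ _
          _ ≤ c * (aseq k - s) + δ :=
              add_le_add (gL k s hs0 hsk) (le_of_lt (hK k (le_max_right _ _)))
          _ ≤ c * (1 - s) + δ := by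
              have := (aseq_lt_one k).le
              nlinarith
      · simp
  have hG : LipschitzWith c.toNNReal (fun t : Set.Icc (0:ℝ) 1 => gmap f p t.1) := by
    apply LipschitzWith.of_dist_le_mul
    intro x y
    have hc' : (c.toNNReal : ℝ) = c := Real.coe_toNNReal _ hc.le
    rw [hc', Subtype.dist_eq, Real.dist_eq]
    rcases le_total x.1 y.1 with hxy | hxy
    · rw [abs_of_nonpos (by linarith), neg_sub]
      exact gFull x.1 y.1 x.2.1 hxy y.2.2
    · rw [abs_of_nonneg (by linarith), dist_comm]
      exact gFull y.1 x.1 y.2.1 hxy x.2.2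
  have hmem : c ∈ {K : ℝ | 0 ≤ K ∧ ∃ f : Set.Icc (0:ℝ) 1 → X,
      LipschitzWith K.toNNReal f ∧ f ⟨0, by norm_num⟩ = v 0 ∧ f ⟨1, by norm_num⟩ = p} := by
    refine ⟨hc.le, fun t => gmap f p t.1, hG, ?_, ?_⟩
    · show gmap f p 0 = v 0
      have h0 : gmap f p 0 = Fmap f 0 0 := by
        refine gEqF 0 (by norm_num) 0 aseq_zero.le ?_
        norm_num [aseq]
      rw [h0, Fmap_left f 0 aseq_zero.ge, hf0]
    · show gmap f p 1 = p
      simp [gmap]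
  exact csInf_le (intrinsic_bddBelow (v 0) p) hmem

end Glue
/-- In a Lipschitz connected metric space, a sequence Cauchy with respect to the
intrinsic metric which converges in the metric `d_X` to a point `p` also converges
to `p` with respect to the intrinsic metric. -/
theorem intrinsic_cauchy_convergent (X : Type) [MetricSpace X]
    (h : LipschitzConnected X) (u : ℕ → X) (p : X)
    (hcauchy : ∀ ε : ℝ, 0 < ε → ∃ N : ℕ, ∀ n ≥ N, ∀ m ≥ N, intrinsicDist (u n) (u m) < ε)
    (hconv : ∀ ε : ℝ, 0 < ε → ∃ N : ℕ, ∀ n ≥ N, dist (u n) p < ε) :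
    ∀ ε : ℝ, 0 < ε → ∃ N : ℕ, ∀ n ≥ N, intrinsicDist (u n) p < ε := by
  intro ε hε
  have hc : 0 < ε/2 := by linarith
  choose φ hφ using fun k : ℕ => hcauchy (ε/2 * (1/2:ℝ)^(k+1)) (by positivity)
  refine ⟨φ 0, fun n hn => ?_⟩
  set m : ℕ → ℕ := fun k => max k ((Finset.range (k+2)).sup φ) with hm
  set v : ℕ → X := fun k => Nat.casesOn k (u n) (fun j => u (m j)) with hv
  have hmφ : ∀ k j, j < k+2 → φ j ≤ m k := fun k j hj =>
    le_max_of_le_right (Finset.le_sup (Finset.mem_range.2 hj))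
  have hmk : ∀ k, k ≤ m k := fun k => le_max_left _ _
  have hIk : ∀ k, intrinsicDist (v k) (v (k+1)) < ε/2 * (1/2:ℝ)^(k+1) := by
    intro k
    cases k with
    | zero => exact hφ 0 n hn (m 0) (hmφ 0 0 (by norm_num))
    | succ j => exact hφ (j+1) (m j) (hmφ j (j+1) (by omega)) (m (j+1)) (hmφ (j+1) (j+1) (by omega))
  have hpaths : ∀ k, ∃ f : Set.Icc (0:ℝ) 1 → X,
      LipschitzWith (ε/2 * (1/2:ℝ)^(k+1)).toNNReal f ∧ f ⟨0, by norm_num⟩ = v k ∧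
        f ⟨1, by norm_num⟩ = v (k+1) := by
    intro k
    obtain ⟨K, hK0, hKlt, f, hfL, hf0, hf1⟩ := exists_path_of_lt h (v k) (v (k+1)) (hIk k)
    exact ⟨f, hfL.weaken (Real.toNNReal_le_toNNReal hKlt.le), hf0, hf1⟩
  choose f hfL hf0 hf1 using hpaths
  have hlim : ∀ δ : ℝ, 0 < δ → ∃ K : ℕ, ∀ k ≥ K, dist (v k) p < δ := by
    intro δ hδ
    obtain ⟨N', hN'⟩ := hconv δ hδ
    refine ⟨N'+1, fun k hk => ?_⟩
    obtain ⟨j, rfl⟩ : ∃ j, k = j+1 := ⟨k-1, by omega⟩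
    exact hN' (m j) (le_trans (by omega) (hmk j))
  have hglue := glue_le v p (ε/2) hc f hfL hf0 hf1 hlim
  calc intrinsicDist (u n) p = intrinsicDist (v 0) p := rfl
    _ ≤ ε/2 := hglue
    _ < ε := by linarith
end

section
/- Let X be a Lipschitz connected metric space with intrinsic metric d_IX. Then (X, d_IX) is analytic (there exist a complete separable metric space Z and a surjection f : Z → X that is continuous as a map into X equipped with d_IX) if and only if d_IX is separable (there is a countable set D ⊆ X such that for every x ∈ X and ε > 0 some y ∈ D satisfies d_IX(x,y) < ε) and the metric space (X, d_X) is analytic (there exist a complete separable metric space Z' and a continuous surjection g : Z' → X). -/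
namespace IntrinsicAux

variable {X : Type*} [MetricSpace X]

def IPaths (x y : X) : Set ℝ :=
  {K : ℝ | 0 ≤ K ∧ ∃ f : Set.Icc (0:ℝ) 1 → X,
    LipschitzWith K.toNNReal f ∧ f ⟨0, by norm_num⟩ = x ∧ f ⟨1, by norm_num⟩ = y}

lemma intrinsicDist_eq (x y : X) : intrinsicDist x y = sInf (IPaths x y) := rfl

lemma bddBelow_IPaths (x y : X) : BddBelow (IPaths x y) :=
  ⟨0, fun _ hK => hK.1⟩

lemma IPaths_nonempty (h : LipschitzConnected X) (x y : X) : (IPaths x y).Nonempty := by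
  obtain ⟨f, ⟨K, hK⟩, h0, h1⟩ := h x y
  exact ⟨K, K.coe_nonneg, f, by simpa [Real.toNNReal_coe] using hK, h0, h1⟩

lemma intrinsicDist_nonneg (x y : X) : 0 ≤ intrinsicDist x y :=
  Real.sInf_nonneg fun _ hK => hK.1

lemma dist_le_of_mem {x y : X} {K : ℝ} (hK : K ∈ IPaths x y) : dist x y ≤ K := by
  obtain ⟨hK0, f, hf, h0, h1⟩ := hK
  have := hf.dist_le_mul ⟨0, by norm_num⟩ ⟨1, by norm_num⟩
  rw [h0, h1, Subtype.dist_eq, Real.dist_eq] at this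
  simp only [Real.coe_toNNReal _ hK0] at this
  calc dist x y ≤ K * |(0:ℝ) - 1| := this
  _ = K := by norm_num

lemma dist_le_intrinsicDist (h : LipschitzConnected X) (x y : X) :
    dist x y ≤ intrinsicDist x y :=
  le_csInf (IPaths_nonempty h x y) fun _ hK => dist_le_of_mem hK

lemma intrinsicDist_self (x : X) : intrinsicDist x x = 0 := by
  refine le_antisymm ?_ (intrinsicDist_nonneg x x)
  refine csInf_le (bddBelow_IPaths x x) ?_
  exact ⟨le_refl 0, fun _ => x, by simpa using LipschitzWith.const x, rfl, rfl⟩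

/-- reversal map on Icc 0 1 -/
def rev : Set.Icc (0:ℝ) 1 → Set.Icc (0:ℝ) 1 := fun t =>
  ⟨1 - t.1, by constructor <;> [linarith [t.2.2]; linarith [t.2.1]]⟩

lemma lipschitz_rev : LipschitzWith 1 (rev : Set.Icc (0:ℝ) 1 → Set.Icc (0:ℝ) 1) := by
  apply LipschitzWith.of_dist_le_mul
  intro a b
  simp only [rev, Subtype.dist_eq, Real.dist_eq]
  rw [NNReal.coe_one, one_mul]
  rw [show (1 - a.1) - (1 - b.1) = -(a.1 - b.1) by ring, abs_neg]

lemma IPaths_symm_subset (x y : X) : IPaths x y ⊆ IPaths y x := by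
  rintro K ⟨hK0, f, hf, h0, h1⟩
  refine ⟨hK0, f ∘ rev, ?_, ?_, ?_⟩
  · simpa using hf.comp lipschitz_rev
  · simp only [Function.comp_apply]
    convert h1 using 2
    simp [rev]
  · simp only [Function.comp_apply]
    convert h0 using 2
    simp [rev]

lemma intrinsicDist_symm (x y : X) : intrinsicDist x y = intrinsicDist y x := by
  rw [intrinsicDist_eq, intrinsicDist_eq,
    Set.Subset.antisymm (IPaths_symm_subset x y) (IPaths_symm_subset y x)]




set_option linter.unusedSectionVars false

section Glue

variable (L : ℕ → ℝ)

def ps (j : ℕ) : ℝ := ∑ k ∈ Finset.range j, L k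

lemma ps_zero : ps L 0 = 0 := by simp [ps]

lemma ps_succ (j : ℕ) : ps L (j + 1) = ps L j + L j := by
  simp [ps, Finset.sum_range_succ]

variable (hL : ∀ k, 0 < L k) (hsum : Summable L)

include hL hsum

lemma ps_mono : StrictMono (ps L) := by
  apply strictMono_nat_of_lt_succ
  intro j
  rw [ps_succ]
  linarith [hL j]

lemma ps_nonneg (j : ℕ) : 0 ≤ ps L j :=
  Finset.sum_nonneg fun k _ => (hL k).le

lemma ps_lt (j : ℕ) : ps L j < ∑' k, L k := by
  have h1 : ps L (j + 1) ≤ ∑' k, L k :=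
    Summable.sum_le_tsum (Finset.range (j + 1)) (fun k _ => (hL k).le) hsum
  rw [ps_succ] at h1
  linarith [hL j]

lemma S_pos : 0 < ∑' k, L k := (ps_nonneg L hL hsum 1).trans_lt (ps_lt L hL hsum 1)

lemma ps_tendsto : Filter.Tendsto (ps L) Filter.atTop (nhds (∑' k, L k)) :=
  hsum.hasSum.tendsto_sum_nat

lemma exJ (t : ℝ) (ht : t < 1) : ∃ j, (∑' k, L k) * t < ps L (j + 1) := by
  have hS := S_pos L hL hsum
  have h1 : (∑' k, L k) * t < ∑' k, L k := by nlinarith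
  obtain ⟨j, hj⟩ := ((ps_tendsto L hL hsum).eventually (eventually_gt_nhds h1)).exists
  exact ⟨j, hj.trans_le (ps_mono L hL hsum (Nat.lt_succ_self j)).le⟩

noncomputable def Jx (t : ℝ) (ht : t < 1) : ℕ := Nat.find (exJ L hL hsum t ht)

lemma Jx_spec (t : ℝ) (ht : t < 1) :
    (∑' k, L k) * t < ps L (Jx L hL hsum t ht + 1) := Nat.find_spec (exJ L hL hsum t ht)

lemma Jx_min (t : ℝ) (ht : t < 1) (h0 : 0 ≤ t) :
    ps L (Jx L hL hsum t ht) ≤ (∑' k, L k) * t := by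
  cases h : Jx L hL hsum t ht with
  | zero =>
    rw [ps_zero]
    exact mul_nonneg (S_pos L hL hsum).le h0
  | succ j =>
    have hlt : j < Jx L hL hsum t ht := by omega
    have := Nat.find_min (exJ L hL hsum t ht) hlt
    exact not_lt.1 this

lemma Jx_mono {t t' : ℝ} (ht : t < 1) (ht' : t' < 1) (htt : t ≤ t') :
    Jx L hL hsum t ht ≤ Jx L hL hsum t' ht' := by
  apply Nat.find_mono
  intro j hj
  refine lt_of_le_of_lt ?_ hj
  exact mul_le_mul_of_nonneg_left htt (S_pos L hL hsum).le

lemma inner_mem (t : ℝ) (ht : t < 1) (h0 : 0 ≤ t) :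
    ((∑' k, L k) * t - ps L (Jx L hL hsum t ht)) / L (Jx L hL hsum t ht)
      ∈ Set.Icc (0:ℝ) 1 := by
  set j := Jx L hL hsum t ht
  constructor
  · apply div_nonneg _ (hL j).le
    have := Jx_min L hL hsum t ht h0
    linarith
  · rw [div_le_one (hL j)]
    have := Jx_spec L hL hsum t ht
    rw [ps_succ] at this
    linarith

variable {X : Type*} [MetricSpace X] (f : ℕ → Set.Icc (0:ℝ) 1 → X) (x : X)

noncomputable def glue : Set.Icc (0:ℝ) 1 → X := fun t =>
  if ht : t.1 < 1 then
    f (Jx L hL hsum t.1 ht)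
      ⟨_, inner_mem L hL hsum t.1 ht t.2.1⟩
  else x

lemma f_congr {k m : ℕ} (hkm : k = m) (a b : Set.Icc (0:ℝ) 1) (hab : a.1 = b.1) :
    f k a = f m b := by subst hkm; exact congrArg (f k) (Subtype.ext hab)

lemma glue_lt (t : Set.Icc (0:ℝ) 1) (ht : t.1 < 1) :
    glue L hL hsum f x t
      = f (Jx L hL hsum t.1 ht) ⟨_, inner_mem L hL hsum t.1 ht t.2.1⟩ := by
  simp [glue, ht]

/-- node point `ps L j / S` as an element of the unit interval -/
noncomputable def node (j : ℕ) : Set.Icc (0:ℝ) 1 :=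
  ⟨ps L j / (∑' k, L k),
    ⟨div_nonneg (ps_nonneg L hL hsum j) (S_pos L hL hsum).le,
     le_of_lt (by rw [div_lt_one (S_pos L hL hsum)]; exact ps_lt L hL hsum j)⟩⟩

lemma node_lt_one (j : ℕ) : (node L hL hsum j).1 < 1 := by
  rw [show (node L hL hsum j).1 = ps L j / (∑' k, L k) from rfl,
    div_lt_one (S_pos L hL hsum)]
  exact ps_lt L hL hsum j

lemma S_mul_node (j : ℕ) : (∑' k, L k) * (node L hL hsum j).1 = ps L j := by
  rw [show (node L hL hsum j).1 = ps L j / (∑' k, L k) from rfl]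
  exact mul_div_cancel₀ _ (S_pos L hL hsum).ne'

lemma Jx_node (j : ℕ) : Jx L hL hsum (node L hL hsum j).1 (node_lt_one L hL hsum j) = j := by
  rw [Jx, Nat.find_eq_iff]
  constructor
  · rw [S_mul_node]
    exact ps_mono L hL hsum (Nat.lt_succ_self j)
  · intro m hm
    rw [S_mul_node, not_lt]
    exact (ps_mono L hL hsum).monotone (Nat.succ_le_of_lt hm)

lemma glue_node (u : ℕ → X) (hf0 : ∀ k, f k ⟨0, by norm_num⟩ = u k) (j : ℕ) :
    glue L hL hsum f x (node L hL hsum j) = u j := by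
  rw [glue_lt L hL hsum f x _ (node_lt_one L hL hsum j), ← hf0 j]
  apply f_congr L hL hsum f (Jx_node L hL hsum j)
  show ((∑' k, L k) * (node L hL hsum j).1
    - ps L (Jx L hL hsum (node L hL hsum j).1 (node_lt_one L hL hsum j)))
    / L (Jx L hL hsum (node L hL hsum j).1 (node_lt_one L hL hsum j)) = 0
  rw [Jx_node L hL hsum j, S_mul_node L hL hsum j, sub_self, zero_div]

variable (u : ℕ → X)

lemma dist_f_le (hf : ∀ k, LipschitzWith (L k).toNNReal (f k)) (k : ℕ)
    (a b : Set.Icc (0:ℝ) 1) :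
    dist (f k a) (f k b) ≤ L k * |a.1 - b.1| := by
  have := (hf k).dist_le_mul a b
  rwa [Subtype.dist_eq, Real.dist_eq, Real.coe_toNNReal _ (hL k).le] at this

lemma dist_glue_next (hf : ∀ k, LipschitzWith (L k).toNNReal (f k))
    (hf1 : ∀ k, f k ⟨1, by norm_num⟩ = u (k + 1))
    (t : Set.Icc (0:ℝ) 1) (ht : t.1 < 1) :
    dist (glue L hL hsum f x t) (u (Jx L hL hsum t.1 ht + 1))
      ≤ ps L (Jx L hL hsum t.1 ht + 1) - (∑' k, L k) * t.1 := by
  rw [glue_lt L hL hsum f x t ht, ← hf1 (Jx L hL hsum t.1 ht)]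
  set j := Jx L hL hsum t.1 ht with hj
  have h := dist_f_le L hL hsum f hf j
    ⟨_, inner_mem L hL hsum t.1 ht t.2.1⟩ ⟨1, by norm_num⟩
  refine h.trans (le_of_eq ?_)
  have hmem := inner_mem L hL hsum t.1 ht t.2.1
  have h1 : |((∑' k, L k) * t.1 - ps L j) / L j - 1|
      = 1 - ((∑' k, L k) * t.1 - ps L j) / L j := by
    rw [abs_of_nonpos (by linarith [hmem.2])]
    ring
  rw [h1, mul_sub, mul_one, mul_div_cancel₀ _ (hL j).ne', ps_succ]
  ring

lemma dist_glue_same (hf : ∀ k, LipschitzWith (L k).toNNReal (f k))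
    (t t' : Set.Icc (0:ℝ) 1) (ht : t.1 < 1) (ht' : t'.1 < 1)
    (hJ : Jx L hL hsum t.1 ht = Jx L hL hsum t'.1 ht') :
    dist (glue L hL hsum f x t) (glue L hL hsum f x t')
      ≤ (∑' k, L k) * |t'.1 - t.1| := by
  rw [glue_lt L hL hsum f x t ht, glue_lt L hL hsum f x t' ht']
  set j := Jx L hL hsum t.1 ht with hjdef
  have key : f (Jx L hL hsum t'.1 ht') ⟨_, inner_mem L hL hsum t'.1 ht' t'.2.1⟩
      = f j ⟨((∑' k, L k) * t'.1 - ps L j) / L j, hJ ▸ inner_mem L hL hsum t'.1 ht' t'.2.1⟩ := by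
    apply f_congr L hL hsum f hJ.symm
    show ((∑' k, L k) * t'.1 - ps L (Jx L hL hsum t'.1 ht')) / L (Jx L hL hsum t'.1 ht')
      = ((∑' k, L k) * t'.1 - ps L j) / L j
    rw [← hJ]
  rw [key]
  have h := dist_f_le L hL hsum f hf j
    ⟨_, inner_mem L hL hsum t.1 ht t.2.1⟩
    ⟨((∑' k, L k) * t'.1 - ps L j) / L j, hJ ▸ inner_mem L hL hsum t'.1 ht' t'.2.1⟩
  refine h.trans (le_of_eq ?_)
  show L j * |((∑' k, L k) * t.1 - ps L j) / L j - ((∑' k, L k) * t'.1 - ps L j) / L j| = _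
  rw [div_sub_div_same, abs_div, abs_of_pos (hL j), mul_div_cancel₀ _ (hL j).ne']
  rw [show (∑' k, L k) * t.1 - ps L j - ((∑' k, L k) * t'.1 - ps L j)
    = -((∑' k, L k) * (t'.1 - t.1)) by ring, abs_neg, abs_mul,
    abs_of_pos (S_pos L hL hsum)]

lemma dist_glue_of_lt (hf : ∀ k, LipschitzWith (L k).toNNReal (f k))
    (hf0 : ∀ k, f k ⟨0, by norm_num⟩ = u k)
    (hf1 : ∀ k, f k ⟨1, by norm_num⟩ = u (k + 1)) :
    ∀ (d : ℕ) (t t' : Set.Icc (0:ℝ) 1) (ht : t.1 < 1) (ht' : t'.1 < 1),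
      t.1 ≤ t'.1 → Jx L hL hsum t'.1 ht' = Jx L hL hsum t.1 ht + d →
      dist (glue L hL hsum f x t) (glue L hL hsum f x t')
        ≤ (∑' k, L k) * (t'.1 - t.1) := by
  intro d
  induction d with
  | zero =>
    intro t t' ht ht' htt hJ
    have := dist_glue_same L hL hsum f x hf t t' ht ht' (by omega)
    rwa [abs_of_nonneg (by linarith)] at this
  | succ d ih =>
    intro t t' ht ht' htt hJ
    set j := Jx L hL hsum t.1 ht with hjdef
    set s := node L hL hsum (j + 1) with hsdef
    have hs1 : s.1 < 1 := node_lt_one L hL hsum (j + 1)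
    have hSs : (∑' k, L k) * s.1 = ps L (j + 1) := S_mul_node L hL hsum (j + 1)
    have hts : t.1 < s.1 := by
      have h1 := Jx_spec L hL hsum t.1 ht
      have hS := S_pos L hL hsum
      nlinarith
    have hst : s.1 ≤ t'.1 := by
      have h1 := Jx_min L hL hsum t'.1 ht' (le_trans t.2.1 htt)
      have h2 : ps L (j + 1) ≤ ps L (Jx L hL hsum t'.1 ht') :=
        (ps_mono L hL hsum).monotone (by omega)
      have hS := S_pos L hL hsum
      nlinarith
    have hJs : Jx L hL hsum s.1 hs1 = j + 1 := Jx_node L hL hsum (j + 1)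
    have hd1 : dist (glue L hL hsum f x t) (glue L hL hsum f x s)
        ≤ (∑' k, L k) * (s.1 - t.1) := by
      rw [glue_node L hL hsum f x u hf0 (j + 1)]
      have := dist_glue_next L hL hsum f x u hf hf1 t ht
      rw [← hjdef] at this
      refine this.trans (le_of_eq ?_)
      rw [← hSs]; ring
    have hd2 : dist (glue L hL hsum f x s) (glue L hL hsum f x t')
        ≤ (∑' k, L k) * (t'.1 - s.1) :=
      ih s t' hs1 ht' hst (by omega)
    calc dist (glue L hL hsum f x t) (glue L hL hsum f x t')
        ≤ dist (glue L hL hsum f x t) (glue L hL hsum f x s)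
          + dist (glue L hL hsum f x s) (glue L hL hsum f x t') := dist_triangle _ _ _
      _ ≤ (∑' k, L k) * (s.1 - t.1) + (∑' k, L k) * (t'.1 - s.1) := add_le_add hd1 hd2
      _ = (∑' k, L k) * (t'.1 - t.1) := by ring

lemma glue_one : glue L hL hsum f x ⟨1, by norm_num⟩ = x := by
  simp [glue]

lemma glue_zero (hf0 : ∀ k, f k ⟨0, by norm_num⟩ = u k) :
    glue L hL hsum f x ⟨0, by norm_num⟩ = u 0 := by
  have : (⟨0, by norm_num⟩ : Set.Icc (0:ℝ) 1) = node L hL hsum 0 := by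
    apply Subtype.ext
    show (0:ℝ) = ps L 0 / (∑' k, L k)
    rw [ps_zero, zero_div]
  rw [this, glue_node L hL hsum f x u hf0 0]

lemma dist_glue_one (hf : ∀ k, LipschitzWith (L k).toNNReal (f k))
    (hf0 : ∀ k, f k ⟨0, by norm_num⟩ = u k)
    (hf1 : ∀ k, f k ⟨1, by norm_num⟩ = u (k + 1))
    (hlim : Filter.Tendsto u Filter.atTop (nhds x))
    (t : Set.Icc (0:ℝ) 1) (ht : t.1 < 1) :
    dist (glue L hL hsum f x t) x ≤ (∑' k, L k) * (1 - t.1) := by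
  set j := Jx L hL hsum t.1 ht with hjdef
  have key : ∀ m, j < m → dist (glue L hL hsum f x t) (u m)
      ≤ ps L m - (∑' k, L k) * t.1 := by
    intro m hm
    set s := node L hL hsum m with hsdef
    have hs1 : s.1 < 1 := node_lt_one L hL hsum m
    have hSs : (∑' k, L k) * s.1 = ps L m := S_mul_node L hL hsum m
    have hts : t.1 ≤ s.1 := by
      have h1 := Jx_spec L hL hsum t.1 ht
      have h2 : ps L (j + 1) ≤ ps L m := (ps_mono L hL hsum).monotone (by omega)
      have hS := S_pos L hL hsum
      nlinarith
    have hJs : Jx L hL hsum s.1 hs1 = m := Jx_node L hL hsum m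
    have := dist_glue_of_lt L hL hsum f x u hf hf0 hf1 (m - j) t s ht hs1 hts (by omega)
    rw [glue_node L hL hsum f x u hf0 m] at this
    refine this.trans (le_of_eq ?_)
    rw [mul_sub, hSs]
  have htend : Filter.Tendsto (fun m => ps L m - (∑' k, L k) * t.1 + dist (u m) x)
      Filter.atTop (nhds ((∑' k, L k) - (∑' k, L k) * t.1 + 0)) := by
    apply Filter.Tendsto.add
    · exact (ps_tendsto L hL hsum).sub_const _
    · have : Filter.Tendsto (fun m => dist (u m) x) Filter.atTop (nhds (dist x x)) :=
        (hlim.dist tendsto_const_nhds)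
      simpa using this
  have hev : ∀ᶠ m in Filter.atTop, dist (glue L hL hsum f x t) x
      ≤ ps L m - (∑' k, L k) * t.1 + dist (u m) x := by
    filter_upwards [Filter.eventually_gt_atTop j] with m hm
    calc dist (glue L hL hsum f x t) x
        ≤ dist (glue L hL hsum f x t) (u m) + dist (u m) x := dist_triangle _ _ _
      _ ≤ ps L m - (∑' k, L k) * t.1 + dist (u m) x := by
          have := key m hm; linarith
  have := ge_of_tendsto htend hev
  refine this.trans (le_of_eq ?_)
  ring

lemma glue_lipschitz (hf : ∀ k, LipschitzWith (L k).toNNReal (f k))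
    (hf0 : ∀ k, f k ⟨0, by norm_num⟩ = u k)
    (hf1 : ∀ k, f k ⟨1, by norm_num⟩ = u (k + 1))
    (hlim : Filter.Tendsto u Filter.atTop (nhds x)) :
    LipschitzWith (∑' k, L k).toNNReal (glue L hL hsum f x) := by
  have hS := S_pos L hL hsum
  apply LipschitzWith.of_dist_le_mul
  have main : ∀ t t' : Set.Icc (0:ℝ) 1, t.1 ≤ t'.1 →
      dist (glue L hL hsum f x t) (glue L hL hsum f x t')
        ≤ (∑' k, L k) * (t'.1 - t.1) := by
    intro t t' htt
    by_cases ht' : t'.1 < 1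
    · have ht : t.1 < 1 := lt_of_le_of_lt htt ht'
      exact dist_glue_of_lt L hL hsum f x u hf hf0 hf1
        (Jx L hL hsum t'.1 ht' - Jx L hL hsum t.1 ht) t t' ht ht' htt
        (by have := Jx_mono L hL hsum ht ht' htt; omega)
    · have ht'1 : t'.1 = 1 := le_antisymm t'.2.2 (not_lt.1 ht')
      have hgt' : glue L hL hsum f x t' = x := by
        have : t' = (⟨1, by norm_num⟩ : Set.Icc (0:ℝ) 1) := Subtype.ext ht'1
        rw [this, glue_one]
      by_cases ht : t.1 < 1
      · rw [hgt']
        have := dist_glue_one L hL hsum f x u hf hf0 hf1 hlim t ht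
        rw [ht'1]
        exact this
      · have ht1 : t.1 = 1 := le_antisymm t.2.2 (not_lt.1 ht)
        have : t = t' := Subtype.ext (by rw [ht1, ht'1])
        rw [this, dist_self]
        have : t'.1 - t'.1 = 0 := by ring
        nlinarith
  intro t t'
  rw [Subtype.dist_eq, Real.dist_eq, Real.coe_toNNReal _ hS.le]
  rcases le_total t.1 t'.1 with htt | htt
  · have := main t t' htt
    rw [abs_of_nonpos (by linarith)]
    refine this.trans (le_of_eq ?_); ring
  · have := main t' t htt
    rw [dist_comm, abs_of_nonneg (by linarith)]
    exact this

/-- The key chain lemma. -/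
lemma intrinsicDist_le_tsum_of_chain (x : X)
    (hf : ∀ k, LipschitzWith (L k).toNNReal (f k))
    (hf0 : ∀ k, f k ⟨0, by norm_num⟩ = u k)
    (hf1 : ∀ k, f k ⟨1, by norm_num⟩ = u (k + 1))
    (hlim : Filter.Tendsto u Filter.atTop (nhds x)) :
    intrinsicDist (u 0) x ≤ ∑' k, L k := by
  apply csInf_le ⟨0, fun K hK => hK.1⟩
  exact ⟨(S_pos L hL hsum).le, glue L hL hsum f x,
    glue_lipschitz L hL hsum f x u hf hf0 hf1 hlim,
    glue_zero L hL hsum f x u hf0, glue_one L hL hsum f x⟩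

end Glue

end IntrinsicAux

section ChainLemma

variable {X : Type*} [MetricSpace X]

open IntrinsicAux in
/-- The fundamental chain lemma: if consecutive intrinsic distances are summable and the
chain converges in the metric, then the intrinsic distance from start to limit is at most
the sum. -/
lemma intrinsicDist_chain_le (h : LipschitzConnected X) (u : ℕ → X) (x : X) (a : ℕ → ℝ)
    (ha : ∀ k, intrinsicDist (u k) (u (k + 1)) ≤ a k) (hsa : Summable a)
    (hlim : Filter.Tendsto u Filter.atTop (nhds x)) :
    intrinsicDist (u 0) x ≤ ∑' k, a k := by
  have ha0 : ∀ k, 0 ≤ a k := fun k => (intrinsicDist_nonneg (u k) (u (k + 1))).trans (ha k)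
  refine le_of_forall_pos_le_add ?_
  intro η hη
  set e : ℕ → ℝ := fun k => η / 2 * (1 / 2) ^ k with hedef
  have he_pos : ∀ k, 0 < e k := fun k => by positivity
  have he_summable : Summable e :=
    (summable_geometric_of_lt_one (by norm_num) (by norm_num)).mul_left _
  have he_tsum : ∑' k, e k = η := by
    rw [hedef, tsum_mul_left, tsum_geometric_of_lt_one (by norm_num) (by norm_num)]
    norm_num
  -- choose good paths
  have hch : ∀ k, ∃ K : ℝ, K ∈ IPaths (u k) (u (k + 1)) ∧
      K < intrinsicDist (u k) (u (k + 1)) + e k / 2 := by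
    intro k
    obtain ⟨K, hK1, hK2⟩ := Real.lt_sInf_add_pos (IPaths_nonempty h (u k) (u (k + 1)))
      (half_pos (he_pos k))
    exact ⟨K, hK1, hK2⟩
  choose K hKmem hKlt using hch
  set L : ℕ → ℝ := fun k => K k + e k / 2 with hLdef
  have hL : ∀ k, 0 < L k := fun k =>
    add_pos_of_nonneg_of_pos (hKmem k).1 (half_pos (he_pos k))
  have hLle : ∀ k, L k ≤ a k + e k := by
    intro k
    have := (hKlt k).le.trans (add_le_add_left (ha k) _)
    simp only [hLdef]
    linarith
  have hLsum : Summable L := by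
    apply Summable.of_nonneg_of_le (fun k => (hL k).le) hLle (hsa.add he_summable)
  obtain ⟨f, hf, hf0, hf1⟩ : ∃ f : ℕ → Set.Icc (0:ℝ) 1 → X,
      (∀ k, LipschitzWith (L k).toNNReal (f k)) ∧
      (∀ k, f k ⟨0, by norm_num⟩ = u k) ∧ (∀ k, f k ⟨1, by norm_num⟩ = u (k + 1)) := by
    have : ∀ k, ∃ fk : Set.Icc (0:ℝ) 1 → X, LipschitzWith (L k).toNNReal fk ∧
        fk ⟨0, by norm_num⟩ = u k ∧ fk ⟨1, by norm_num⟩ = u (k + 1) := by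
      intro k
      obtain ⟨hK0, fk, hfk, h0, h1⟩ := hKmem k
      refine ⟨fk, hfk.weaken (Real.toNNReal_mono ?_), h0, h1⟩
      show K k ≤ L k
      have hlk : L k = K k + e k / 2 := rfl
      rw [hlk]
      exact le_add_of_nonneg_right (half_pos (he_pos k)).le
    choose f h1 h2 h3 using this
    exact ⟨f, h1, h2, h3⟩
  have := intrinsicDist_le_tsum_of_chain L hL hLsum f u x hf hf0 hf1 hlim
  refine this.trans ?_
  calc ∑' k, L k ≤ ∑' k, (a k + e k) := by
        apply Summable.tsum_le_tsum hLle hLsum (hsa.add he_summable)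
    _ = (∑' k, a k) + η := by rw [Summable.tsum_add hsa he_summable, he_tsum]

lemma intrinsicDist_triangle' (h : LipschitzConnected X) (x y z : X) :
    intrinsicDist x z ≤ intrinsicDist x y + intrinsicDist y z := by
  set u : ℕ → X := fun k => match k with | 0 => x | 1 => y | _ + 2 => z with hu
  set a : ℕ → ℝ := fun k => match k with
    | 0 => intrinsicDist x y | 1 => intrinsicDist y z | _ + 2 => 0 with hadef
  have ha : ∀ k, intrinsicDist (u k) (u (k + 1)) ≤ a k := by
    intro k
    match k with
    | 0 => exact le_refl _
    | 1 => exact le_refl _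
    | n + 2 => exact le_of_eq (IntrinsicAux.intrinsicDist_self z)
  have hsa : Summable a := by
    apply summable_of_ne_finset_zero (s := {0, 1})
    intro k hk
    match k with
    | 0 => simp at hk
    | 1 => simp at hk
    | n + 2 => rfl
  have hlim : Filter.Tendsto u Filter.atTop (nhds z) := by
    apply tendsto_atTop_of_eventually_const (i₀ := 2)
    intro k hk
    match k, hk with
    | n + 2, _ => rfl
  have := intrinsicDist_chain_le h u z a ha hsa hlim
  have htsum : ∑' k, a k = intrinsicDist x y + intrinsicDist y z := by
    rw [tsum_eq_sum (s := {0, 1}) (by intro k hk; match k, hk with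
      | 0, hk => simp at hk
      | 1, hk => simp at hk
      | n + 2, _ => rfl)]
    simp [hadef]
  rw [htsum] at this
  exact this

end ChainLemma



/-- For a Lipschitz connected metric space `X`, the intrinsic metric is analytic iff it
is separable and the metric `d_X` is analytic. -/
theorem intrinsic_analytic_iff (X : Type) [MetricSpace X] (h : LipschitzConnected X) :
    (∃ (Z : Type) (_ : MetricSpace Z) (_ : CompleteSpace Z)
      (_ : TopologicalSpace.SeparableSpace Z) (f : Z → X),
        Function.Surjective f ∧
        ∀ z : Z, ∀ ε : ℝ, 0 < ε → ∃ δ : ℝ, 0 < δ ∧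
          ∀ z' : Z, dist z z' < δ → intrinsicDist (f z) (f z') < ε)
    ↔ ((∃ D : Set X, D.Countable ∧
          ∀ x : X, ∀ ε : ℝ, 0 < ε → ∃ y ∈ D, intrinsicDist x y < ε) ∧
        IsAnalyticMetricSpace X) := by
  constructor
  · rintro ⟨Z, _, _, _, f, hsurj, hcont⟩
    constructor
    · obtain ⟨s, hs_count, hs_dense⟩ := TopologicalSpace.exists_countable_dense Z
      refine ⟨f '' s, hs_count.image f, ?_⟩
      intro x ε hε
      obtain ⟨z, rfl⟩ := hsurj x
      obtain ⟨δ, hδ, hδ'⟩ := hcont z ε hε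
      obtain ⟨z', hz's, hz'⟩ := hs_dense.exists_dist_lt z hδ
      exact ⟨f z', ⟨z', hz's, rfl⟩, hδ' z' hz'⟩
    · refine ⟨Z, ‹_›, ‹_›, ‹_›, f, ?_, hsurj⟩
      rw [Metric.continuous_iff]
      intro z ε hε
      obtain ⟨δ, hδ, hδ'⟩ := hcont z ε hε
      refine ⟨δ, hδ, fun z' hz' => ?_⟩
      calc dist (f z') (f z) = dist (f z) (f z') := dist_comm _ _
        _ ≤ intrinsicDist (f z) (f z') := IntrinsicAux.dist_le_intrinsicDist h _ _
        _ < ε := hδ' z' (by rwa [dist_comm])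
  · rintro ⟨⟨D, hDc, hDd⟩, ⟨Z', mZ', cZ', sZ', g, hgc, hgs⟩⟩
    by_cases hX : Nonempty X
    swap
    · haveI : IsEmpty Z' := ⟨fun z => hX ⟨g z⟩⟩
      exact ⟨Z', mZ', cZ', sZ', g, hgs, fun z => isEmptyElim z⟩
    -- main construction
    obtain ⟨x0⟩ := hX
    obtain ⟨y0, hy0D, -⟩ := hDd x0 1 one_pos
    obtain ⟨e, hDe⟩ := hDc.exists_eq_range ⟨y0, hy0D⟩
    have hde : ∀ x : X, ∀ ε : ℝ, 0 < ε → ∃ n : ℕ, intrinsicDist x (e n) < ε := by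
      intro x ε hε
      obtain ⟨y, hyD, hy⟩ := hDd x ε hε
      rw [hDe] at hyD
      obtain ⟨n, rfl⟩ := hyD
      exact ⟨n, hy⟩
    letI MNN : MetricSpace (ℕ → ℕ) := PiNat.metricSpaceNatNat
    haveI hcompNN : CompleteSpace (ℕ → ℕ) := by
      refine Metric.complete_of_convergent_controlled_sequences (fun n => (1 / 2) ^ n)
        (by simp) ?_
      intro u hu
      refine ⟨fun n => u n n, tendsto_pi_nhds.2 fun i => ?_⟩
      refine tendsto_const_nhds.congr' ?_
      filter_upwards [Filter.Ici_mem_atTop i] with n hn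
      exact PiNat.apply_eq_of_dist_lt (hu i i n le_rfl hn) le_rfl
    set C : Set ((ℕ → ℕ) × Z') := ⋂ (n : ℕ) (k : ℕ),
      {p : (ℕ → ℕ) × Z' |
          intrinsicDist (e (p.1 (Nat.pair n k))) (e (p.1 (Nat.pair n (k + 1))))
            ≤ (1 / 2) ^ (n + k + 1)} ∩
      {p : (ℕ → ℕ) × Z' | dist (e (p.1 (Nat.pair n k))) (g p.2) ≤ (1 / 2) ^ (n + k)}
      with hCdef
    have hmemC : ∀ p : (ℕ → ℕ) × Z', p ∈ C ↔ ∀ n k : ℕ,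
        intrinsicDist (e (p.1 (Nat.pair n k))) (e (p.1 (Nat.pair n (k + 1))))
          ≤ (1 / 2) ^ (n + k + 1) ∧
        dist (e (p.1 (Nat.pair n k))) (g p.2) ≤ (1 / 2) ^ (n + k) := by
      intro p
      simp only [hCdef, Set.mem_iInter, Set.mem_inter_iff, Set.mem_setOf_eq]
    have hC_closed : IsClosed C := by
      apply isClosed_iInter
      intro n
      apply isClosed_iInter
      intro k
      apply IsClosed.inter
      · have hc : Continuous fun p : (ℕ → ℕ) × Z' =>
            intrinsicDist (e (p.1 (Nat.pair n k))) (e (p.1 (Nat.pair n (k + 1)))) := by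
          have h1 : Continuous fun p : (ℕ → ℕ) × Z' =>
              (p.1 (Nat.pair n k), p.1 (Nat.pair n (k + 1))) :=
            ((continuous_apply _).comp continuous_fst).prodMk
              ((continuous_apply _).comp continuous_fst)
          exact (continuous_of_discreteTopology
            (f := fun ab : ℕ × ℕ => intrinsicDist (e ab.1) (e ab.2))).comp h1
        exact isClosed_le hc continuous_const
      · have hc : Continuous fun p : (ℕ → ℕ) × Z' =>
            dist (e (p.1 (Nat.pair n k))) (g p.2) := by
          apply Continuous.dist
          · exact (continuous_of_discreteTopology (f := e)).comp
              ((continuous_apply _).comp continuous_fst)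
          · exact hgc.comp continuous_snd
        exact isClosed_le hc continuous_const
    haveI hsepP : TopologicalSpace.SeparableSpace ((ℕ → ℕ) × Z') := by infer_instance
    haveI hscP : SecondCountableTopology ((ℕ → ℕ) × Z') :=
      UniformSpace.secondCountable_of_separable _
    haveI : CompleteSpace ↥C := hC_closed.completeSpace_coe
    haveI : TopologicalSpace.SeparableSpace ↥C :=
      TopologicalSpace.SecondCountableTopology.to_separableSpace
    -- soundness
    have hsound : ∀ p : ↥C, ∀ n : ℕ,
        intrinsicDist (e ((p : (ℕ → ℕ) × Z').1 (Nat.pair n 0))) (g (p : (ℕ → ℕ) × Z').2)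
          ≤ (1 / 2) ^ n := by
      intro p n
      have hp := (hmemC _).1 p.2
      set u : ℕ → X := fun k => e ((p : (ℕ → ℕ) × Z').1 (Nat.pair n k)) with hu
      set a : ℕ → ℝ := fun k => (1 / 2) ^ (n + k + 1) with hadef
      have hsa : Summable a := by
        have : a = fun k => (1 / 2) ^ (n + 1) * (1 / 2) ^ k := by
          funext k
          show (1 / 2 : ℝ) ^ (n + k + 1) = _
          rw [show n + k + 1 = (n + 1) + k by omega, pow_add]
        rw [this]
        exact (summable_geometric_of_lt_one (by norm_num) (by norm_num)).mul_left _
      have hlim : Filter.Tendsto u Filter.atTop (nhds (g (p : (ℕ → ℕ) × Z').2)) := by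
        rw [tendsto_iff_dist_tendsto_zero]
        apply squeeze_zero (fun k => dist_nonneg) (fun k => (hp n k).2)
        have : Filter.Tendsto (fun k : ℕ => (1 / 2 : ℝ) ^ n * (1 / 2) ^ k)
            Filter.atTop (nhds ((1 / 2) ^ n * 0)) :=
          (tendsto_pow_atTop_nhds_zero_of_lt_one (by norm_num) (by norm_num)).const_mul _
        rw [mul_zero] at this
        refine this.congr ?_
        intro k
        rw [← pow_add]
      have := intrinsicDist_chain_le h u (g (p : (ℕ → ℕ) × Z').2) a
        (fun k => (hp n k).1) hsa hlim
      refine this.trans (le_of_eq ?_)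
      have h1 : a = fun k => (1 / 2) ^ (n + 1) * (1 / 2) ^ k := by
        funext k
        show (1 / 2 : ℝ) ^ (n + k + 1) = _
        rw [show n + k + 1 = (n + 1) + k by omega, pow_add]
      rw [h1, tsum_mul_left, tsum_geometric_of_lt_one (by norm_num) (by norm_num)]
      rw [pow_succ]
      norm_num
      ring
    refine ⟨↥C, inferInstance, inferInstance, inferInstance,
      fun p => g (p : (ℕ → ℕ) × Z').2, ?_, ?_⟩
    · -- surjectivity
      intro x
      obtain ⟨w, hw⟩ := hgs x
      have hch : ∀ m : ℕ, ∃ j : ℕ, intrinsicDist x (e j)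
          < (1 / 2) ^ ((Nat.unpair m).1 + (Nat.unpair m).2 + 3) :=
        fun m => hde x _ (by positivity)
      choose hfn hhfn using hch
      have hmem : (hfn, w) ∈ C := by
        rw [hmemC]
        intro n k
        have h1 := hhfn (Nat.pair n k)
        have h2 := hhfn (Nat.pair n (k + 1))
        rw [Nat.unpair_pair] at h1 h2
        simp only at h1 h2
        constructor
        · have htri := intrinsicDist_triangle' h (e (hfn (Nat.pair n k))) x
            (e (hfn (Nat.pair n (k + 1))))
          have hsymm := IntrinsicAux.intrinsicDist_symm x (e (hfn (Nat.pair n k)))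
          have hp1 : (1 / 2 : ℝ) ^ (n + (k + 1) + 3) ≤ (1 / 2) ^ (n + k + 3) :=
            pow_le_pow_of_le_one (by norm_num) (by norm_num) (by omega)
          have hp2 : (1 / 2 : ℝ) ^ (n + k + 3) + (1 / 2) ^ (n + k + 3) ≤ (1 / 2) ^ (n + k + 1) := by
            rw [show n + k + 3 = (n + k + 1) + 2 by omega, pow_add]
            norm_num
            nlinarith [pow_pos (by norm_num : (0:ℝ) < 1/2) (n + k + 1),
              pow_nonneg (by norm_num : (0:ℝ) ≤ 1/2) (n + k + 1)]
          calc intrinsicDist (e (hfn (Nat.pair n k))) (e (hfn (Nat.pair n (k + 1))))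
              ≤ intrinsicDist (e (hfn (Nat.pair n k))) x
                + intrinsicDist x (e (hfn (Nat.pair n (k + 1)))) := htri
            _ ≤ (1 / 2) ^ (n + k + 3) + (1 / 2) ^ (n + k + 3) := by
                rw [← hsymm]
                exact add_le_add h1.le (h2.le.trans hp1)
            _ ≤ (1 / 2) ^ (n + k + 1) := hp2
        · show dist (e (hfn (Nat.pair n k))) (g w) ≤ (1 / 2) ^ (n + k)
          have hd : dist (e (hfn (Nat.pair n k))) x
              ≤ intrinsicDist (e (hfn (Nat.pair n k))) x :=
            IntrinsicAux.dist_le_intrinsicDist h _ _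
          have hsymm := IntrinsicAux.intrinsicDist_symm x (e (hfn (Nat.pair n k)))
          have hp1 : (1 / 2 : ℝ) ^ (n + k + 3) ≤ (1 / 2) ^ (n + k) :=
            pow_le_pow_of_le_one (by norm_num) (by norm_num) (by omega)
          calc dist (e (hfn (Nat.pair n k))) (g w)
              = dist (e (hfn (Nat.pair n k))) x := by rw [hw]
            _ ≤ intrinsicDist (e (hfn (Nat.pair n k))) x := hd
            _ = intrinsicDist x (e (hfn (Nat.pair n k))) := hsymm.symm
            _ ≤ (1 / 2) ^ (n + k) := (h1.le.trans hp1)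
      exact ⟨⟨(hfn, w), hmem⟩, hw⟩
    · -- continuity
      intro p ε hε
      obtain ⟨n, hn⟩ : ∃ n : ℕ, (1 / 2 : ℝ) ^ n < ε / 2 :=
        exists_pow_lt_of_lt_one (by positivity) (by norm_num)
      set N := Nat.pair n 0 with hN
      refine ⟨(1 / 2) ^ (N + 1), by positivity, ?_⟩
      intro q hq
      have hdist1 : dist (p : (ℕ → ℕ) × Z').1 (q : (ℕ → ℕ) × Z').1 < (1 / 2) ^ (N + 1) := by
        rw [Subtype.dist_eq, Prod.dist_eq] at hq
        exact lt_of_le_of_lt (le_max_left _ _) hq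
      have heq : (p : (ℕ → ℕ) × Z').1 N = (q : (ℕ → ℕ) × Z').1 N := by
        apply PiNat.apply_eq_of_dist_lt (n := N + 1) hdist1 (by omega)
      have h1 := hsound p n
      have h2 := hsound q n
      rw [← heq] at h2
      have htri := intrinsicDist_triangle' h (g (p : (ℕ → ℕ) × Z').2)
        (e ((p : (ℕ → ℕ) × Z').1 N)) (g (q : (ℕ → ℕ) × Z').2)
      have hsymm := IntrinsicAux.intrinsicDist_symm
        (e ((p : (ℕ → ℕ) × Z').1 N)) (g (p : (ℕ → ℕ) × Z').2)
      calc intrinsicDist (g (p : (ℕ → ℕ) × Z').2) (g (q : (ℕ → ℕ) × Z').2)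
          ≤ intrinsicDist (g (p : (ℕ → ℕ) × Z').2) (e ((p : (ℕ → ℕ) × Z').1 N))
            + intrinsicDist (e ((p : (ℕ → ℕ) × Z').1 N)) (g (q : (ℕ → ℕ) × Z').2) := htri
        _ ≤ (1 / 2) ^ n + (1 / 2) ^ n := add_le_add (hsymm ▸ h1) h2
        _ < ε / 2 + ε / 2 := by linarith
        _ = ε := by ring
end

section
/- Every Lipschitz connected metric space X is a 1-Lipschitz image of a complete ℝ-tree: there exist a complete metric space Y which is an ℝ-tree and a surjective 1-Lipschitz map γ : Y → X. -/
lemma nonempty_isom_of_param {Y : Type*} [MetricSpace Y] (S : Set Y) (D : ℝ)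
    (φ : Set.Icc (0:ℝ) D → Y)
    (hiso : ∀ r r' : Set.Icc (0:ℝ) D, dist (φ r) (φ r') = |(r : ℝ) - (r' : ℝ)|)
    (hmem : ∀ p, p ∈ S ↔ ∃ r, φ r = p) :
    Nonempty (S ≃ᵢ (Set.Icc (0:ℝ) D)) := by
  have hinj : Function.Injective φ := by
    intro r r' hr
    have h1 := hiso r r'
    rw [hr, dist_self] at h1
    exact Subtype.ext (sub_eq_zero.1 (abs_eq_zero.1 h1.symm))
  let e : Set.Icc (0:ℝ) D → S := fun r => ⟨φ r, (hmem _).2 ⟨r, rfl⟩⟩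
  have hbij : Function.Bijective e := by
    constructor
    · intro r r' hr
      exact hinj (congrArg Subtype.val hr)
    · rintro ⟨p, hp⟩
      obtain ⟨r, hr⟩ := (hmem p).1 hp
      exact ⟨r, Subtype.ext hr⟩
  refine ⟨(IsometryEquiv.mk (Equiv.ofBijective e hbij) ?_).symm⟩
  apply Isometry.of_dist_eq
  intro r r'
  show dist (⟨φ r, _⟩ : S) (⟨φ r', _⟩ : S) = dist r r'
  rw [Subtype.dist_eq, Subtype.dist_eq, hiso r r', Real.dist_eq]

section StarSec

variable {X : Type} [MetricSpace X]

def StarT (X : Type) [MetricSpace X] (x₀ : X) : Type :=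
  {p : X × ℝ // 0 ≤ p.2 ∧ (p.2 = 0 → p.1 = x₀)}

variable {x₀ : X}

namespace StarT

open Classical in
noncomputable def sdist (p q : StarT X x₀) : ℝ :=
  if p.1.1 = q.1.1 then |p.1.2 - q.1.2| else p.1.2 + q.1.2

lemma sdist_self (p : StarT X x₀) : sdist p p = 0 := by simp [sdist]

lemma sdist_comm (p q : StarT X x₀) : sdist p q = sdist q p := by
  unfold sdist
  by_cases h : p.1.1 = q.1.1
  · rw [if_pos h, if_pos h.symm, abs_sub_comm]
  · rw [if_neg h, if_neg fun hh => h hh.symm, add_comm]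

lemma le_sdist (p q : StarT X x₀) : |p.1.2 - q.1.2| ≤ sdist p q := by
  have hs := p.2.1; have ht := q.2.1
  unfold sdist; split_ifs
  · exact le_refl _
  · rcases abs_cases (p.1.2 - q.1.2) with ⟨e, f⟩ | ⟨e, f⟩ <;> linarith

lemma sdist_triangle (p q r : StarT X x₀) : sdist p r ≤ sdist p q + sdist q r := by
  have hs := p.2.1; have ht := q.2.1; have hu := r.2.1
  by_cases h3 : p.1.1 = r.1.1
  · calc sdist p r = |p.1.2 - r.1.2| := by unfold sdist; rw [if_pos h3]
    _ ≤ |p.1.2 - q.1.2| + |q.1.2 - r.1.2| := abs_sub_le _ _ _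
    _ ≤ sdist p q + sdist q r := add_le_add (le_sdist p q) (le_sdist q r)
  · have hpr : sdist p r = p.1.2 + r.1.2 := by unfold sdist; rw [if_neg h3]
    rw [hpr]
    by_cases h1 : p.1.1 = q.1.1
    · have h2 : ¬ q.1.1 = r.1.1 := fun hh => h3 (h1.trans hh)
      have hqr : sdist q r = q.1.2 + r.1.2 := by unfold sdist; rw [if_neg h2]
      have h4 := le_sdist p q
      rw [hqr]
      rcases abs_cases (p.1.2 - q.1.2) with ⟨e, f⟩ | ⟨e, f⟩ <;> linarith
    · have hpq : sdist p q = p.1.2 + q.1.2 := by unfold sdist; rw [if_neg h1]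
      have h4 := le_sdist q r
      rw [hpq]
      rcases abs_cases (q.1.2 - r.1.2) with ⟨e, f⟩ | ⟨e, f⟩ <;> linarith

lemma eq_of_sdist_eq_zero {p q : StarT X x₀} (hpq : sdist p q = 0) : p = q := by
  unfold sdist at hpq
  by_cases h : p.1.1 = q.1.1
  · rw [if_pos h] at hpq
    have : p.1.2 = q.1.2 := by have := abs_eq_zero.1 hpq; linarith
    exact Subtype.ext (Prod.ext h this)
  · rw [if_neg h] at hpq
    have hs := p.2.1; have ht := q.2.1
    have h1 : p.1.2 = 0 := by linarith
    have h2 : q.1.2 = 0 := by linarith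
    exact absurd ((p.2.2 h1).trans (q.2.2 h2).symm) h

noncomputable instance : MetricSpace (StarT X x₀) where
  dist := sdist
  dist_self := sdist_self
  dist_comm := sdist_comm
  dist_triangle := sdist_triangle
  eq_of_dist_eq_zero := eq_of_sdist_eq_zero

lemma dist_def (p q : StarT X x₀) : dist p q = sdist p q := rfl

def center : StarT X x₀ := ⟨(x₀, 0), le_refl 0, fun _ => rfl⟩

noncomputable def mk (x : X) (s : ℝ) : StarT X x₀ :=
  if h : 0 < s then ⟨(x, s), le_of_lt h, fun h0 => absurd h0 (ne_of_gt h)⟩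
  else center

lemma mk_nonpos {x : X} {s : ℝ} (h : ¬ 0 < s) : (mk x s : StarT X x₀) = center :=
  dif_neg h

lemma mk_pos {x : X} {s : ℝ} (h : 0 < s) :
    (mk x s : StarT X x₀) = ⟨(x, s), le_of_lt h, fun h0 => absurd h0 (ne_of_gt h)⟩ :=
  dif_pos h

lemma mk_snd {x : X} {s : ℝ} (hs : 0 ≤ s) : (mk x s : StarT X x₀).1.2 = s := by
  by_cases h : 0 < s
  · rw [mk_pos h]
  · rw [mk_nonpos h]
    have : s = 0 := le_antisymm (not_lt.1 h) hs
    simp [center, this]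

lemma mk_fst {x : X} {s : ℝ} (h : 0 < s) : (mk x s : StarT X x₀).1.1 = x := by
  rw [mk_pos h]

lemma mk_eta (p : StarT X x₀) : mk p.1.1 p.1.2 = p := by
  obtain ⟨⟨x, s⟩, hs, hx⟩ := p
  unfold mk; split_ifs with h
  · exact dif_pos h
  · have h0 : s = 0 := le_antisymm (not_lt.1 h) hs
    refine (dif_neg h).trans ?_
    exact Subtype.ext (Prod.ext (hx h0).symm h0.symm)

lemma dist_mk_same (x : X) {s t : ℝ} (hs : 0 ≤ s) (ht : 0 ≤ t) :
    dist (mk x s : StarT X x₀) (mk x t) = |s - t| := by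
  rw [dist_def]
  by_cases h1 : 0 < s <;> by_cases h2 : 0 < t <;>
    simp only [mk_pos, mk_nonpos, h1, h2, not_false_eq_true]
  · unfold sdist; rw [if_pos rfl]
  · have ht0 : t = 0 := le_antisymm (not_lt.1 h2) ht
    subst ht0
    unfold sdist center
    split_ifs <;> simp [abs_of_nonneg hs]
  · have hs0 : s = 0 := le_antisymm (not_lt.1 h1) hs
    subst hs0
    unfold sdist center
    split_ifs <;> simp [abs_of_nonneg ht, abs_sub_comm]
  · have ht0 : t = 0 := le_antisymm (not_lt.1 h2) ht
    have hs0 : s = 0 := le_antisymm (not_lt.1 h1) hs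
    subst ht0; subst hs0
    simp [sdist_self]

lemma dist_mk_ne {x y : X} (hxy : x ≠ y) {s t : ℝ} (hs : 0 ≤ s) (ht : 0 ≤ t) :
    dist (mk x s : StarT X x₀) (mk y t) = s + t := by
  rw [dist_def]
  by_cases h1 : 0 < s <;> by_cases h2 : 0 < t <;>
    simp only [mk_pos, mk_nonpos, h1, h2, not_false_eq_true]
  · unfold sdist; rw [if_neg hxy]
  · have ht0 : t = 0 := le_antisymm (not_lt.1 h2) ht
    subst ht0
    unfold sdist center
    split_ifs <;> simp [abs_of_nonneg hs]
  · have hs0 : s = 0 := le_antisymm (not_lt.1 h1) hs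
    subst hs0
    unfold sdist center
    split_ifs <;> simp [abs_of_nonneg ht, abs_sub_comm]
  · have ht0 : t = 0 := le_antisymm (not_lt.1 h2) ht
    have hs0 : s = 0 := le_antisymm (not_lt.1 h1) hs
    subst ht0; subst hs0
    simp [sdist_self]

lemma dist_center (p : StarT X x₀) : dist p center = p.1.2 := by
  rw [dist_def]
  unfold sdist center
  split_ifs <;> simp [abs_of_nonneg p.2.1]

noncomputable instance : CompleteSpace (StarT X x₀) := by
  apply Metric.complete_of_cauchySeq_tendsto
  intro u hu
  have hdist : ∀ n m, |(u n).1.2 - (u m).1.2| ≤ dist (u n) (u m) :=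
    fun n m => le_sdist (u n) (u m)
  have hcs : CauchySeq (fun n => (u n).1.2) := by
    rw [Metric.cauchySeq_iff] at hu ⊢
    intro ε hε
    obtain ⟨N, hN⟩ := hu ε hε
    exact ⟨N, fun m hm n hn => lt_of_le_of_lt
      (by rw [Real.dist_eq]; exact hdist m n) (hN m hm n hn)⟩
  obtain ⟨L, hL⟩ := cauchySeq_tendsto_of_complete hcs
  have hL0 : 0 ≤ L := le_of_tendsto_of_tendsto' tendsto_const_nhds hL fun n => (u n).2.1
  rcases eq_or_lt_of_le hL0 with hLz | hLpos
  · refine ⟨center, ?_⟩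
    rw [tendsto_iff_dist_tendsto_zero]
    simp only [dist_center]
    exact hLz ▸ hL
  · have habs : Filter.Tendsto (fun n => |(u n).1.2 - L|) Filter.atTop (nhds 0) := by
      have := (hL.sub (tendsto_const_nhds (x := L))).abs
      simpa using this
    rw [Metric.cauchySeq_iff] at hu
    obtain ⟨N1, hN1⟩ := hu (L / 2) (by linarith)
    obtain ⟨N2, hN2'⟩ := Metric.tendsto_atTop.1 habs (L / 4) (by linarith)
    have hN2 : ∀ n, N2 ≤ n → |(u n).1.2 - L| < L / 4 := by
      intro n hn
      have := hN2' n hn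
      rwa [Real.dist_eq, sub_zero, abs_abs] at this
    set N := max N1 N2 with hN
    have hbig : ∀ n, N ≤ n → L / 2 < (u n).1.2 := by
      intro n hn
      have := hN2 n (le_trans (le_max_right _ _) hn)
      rcases abs_cases ((u n).1.2 - L) with ⟨e, f⟩ | ⟨e, f⟩ <;> linarith
    have hsame : ∀ n, N ≤ n → (u n).1.1 = (u N).1.1 := by
      intro n hn
      by_contra hne
      have hd : dist (u n) (u N) = (u n).1.2 + (u N).1.2 := by
        rw [dist_def]; unfold sdist; rw [if_neg hne]
      have h5 := hN1 n (le_trans (le_max_left _ _) hn) N (le_max_left _ _)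
      have h6 := hbig n hn
      have h7 := hbig N (le_refl N)
      rw [hd] at h5
      linarith
    refine ⟨⟨((u N).1.1, L), hL0, fun h => absurd h (ne_of_gt hLpos)⟩, ?_⟩
    apply tendsto_iff_dist_tendsto_zero.2
    have hev : (fun n => dist (u n) ⟨((u N).1.1, L), hL0, fun h => absurd h (ne_of_gt hLpos)⟩)
        =ᶠ[Filter.atTop] fun n => |(u n).1.2 - L| := by
      filter_upwards [Filter.eventually_ge_atTop N] with n hn
      show (@ite _ ((u n).1.1 = (u N).1.1) (Classical.propDecidable _) |(u n).1.2 - L| ((u n).1.2 + L)) = _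
      rw [if_pos (hsame n hn)]
    exact habs.congr' hev.symm

open Classical in
lemma exists_param (a b : StarT X x₀) :
    ∃ φ : Set.Icc (0:ℝ) (dist a b) → StarT X x₀,
      (∀ r r', dist (φ r) (φ r') = |(r : ℝ) - (r' : ℝ)|) ∧
      (∀ p, p ∈ MetricSegment a b ↔ ∃ r, φ r = p) := by
  obtain ⟨x, s, hs, hsx, rfl⟩ : ∃ x s, 0 ≤ s ∧ (s = 0 → x = x₀) ∧ mk x s = a :=
    ⟨a.1.1, a.1.2, a.2.1, a.2.2, mk_eta a⟩
  obtain ⟨y, t, ht, hty, rfl⟩ : ∃ y t, 0 ≤ t ∧ (t = 0 → y = x₀) ∧ mk y t = b :=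
    ⟨b.1.1, b.1.2, b.2.1, b.2.2, mk_eta b⟩
  by_cases hxy : x = y
  · subst hxy
    have hD : dist (mk x s : StarT X x₀) (mk x t) = |s - t| := dist_mk_same x hs ht
    have hmm : min s t + max s t = s + t := min_add_max s t
    have hms : max s t - min s t = |s - t| :=
      (max_sub_min_eq_abs s t).trans (abs_sub_comm t s)
    have hm0 : (0:ℝ) ≤ min s t := le_min hs ht
    refine ⟨fun r => mk x (min s t + r.1), ?_, ?_⟩
    · rintro ⟨rv, hrv⟩ ⟨rv', hrv'⟩
      show dist (mk x (min s t + rv) : StarT X x₀) (mk x (min s t + rv')) = |rv - rv'|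
      have h1 : (0:ℝ) ≤ min s t + rv := by have := hrv.1; linarith
      have h2 : (0:ℝ) ≤ min s t + rv' := by have := hrv'.1; linarith
      rw [dist_mk_same x h1 h2]
      congr 1; ring
    · intro p
      simp only [MetricSegment, Set.mem_setOf_eq]
      constructor
      · intro hp
        obtain ⟨z, u, hu, hzu, rfl⟩ : ∃ z u, 0 ≤ u ∧ (u = 0 → z = x₀) ∧ mk z u = p :=
          ⟨p.1.1, p.1.2, p.2.1, p.2.2, mk_eta p⟩
        rw [hD] at hp
        by_cases hzx : z = x
        · subst hzx
          rw [dist_mk_same z hs hu, dist_mk_same z hu ht] at hp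
          have hub : min s t ≤ u ∧ u ≤ max s t := by
            constructor <;>
            · rcases abs_cases (s - u) with ⟨e1,f1⟩|⟨e1,f1⟩ <;>
              rcases abs_cases (u - t) with ⟨e2,f2⟩|⟨e2,f2⟩ <;>
              rcases abs_cases (s - t) with ⟨e3,f3⟩|⟨e3,f3⟩ <;> linarith
          refine ⟨⟨u - min s t, Set.mem_Icc.2 ⟨by linarith [hub.1], ?_⟩⟩, ?_⟩
          · rw [hD]; linarith [hub.2]
          · show mk z (min s t + (u - min s t)) = mk z u
            have he : min s t + (u - min s t) = u := by ring
            rw [he]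
        · have hxz : x ≠ z := fun h => hzx h.symm
          rw [dist_mk_ne hxz hs hu, dist_mk_ne hzx hu ht] at hp
          have habs : |s - t| ≤ s + t := by
            rcases abs_cases (s - t) with ⟨e,f⟩|⟨e,f⟩ <;> linarith
          have hu0 : u = 0 := le_antisymm (by linarith) hu
          have hmz : min s t = 0 := by
            rcases abs_cases (s - t) with ⟨e,f⟩|⟨e,f⟩
            · have ht0 : t = 0 := by linarith
              rw [ht0]; exact min_eq_right hs
            · have hs0 : s = 0 := by linarith
              rw [hs0]; exact min_eq_left ht
          subst hu0
          refine ⟨⟨0, Set.left_mem_Icc.2 dist_nonneg⟩, ?_⟩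
          show mk x (min s t + 0) = mk z 0
          rw [hmz]
          rw [mk_nonpos (by norm_num), mk_nonpos (by norm_num)]
      · rintro ⟨⟨rv, hrv⟩, rfl⟩
        have hr1 : (0:ℝ) ≤ rv := hrv.1
        have hr2 : rv ≤ dist (mk x s : StarT X x₀) (mk x t) := hrv.2
        rw [hD] at hr2
        have h1 : (0:ℝ) ≤ min s t + rv := by linarith
        show dist (mk x s : StarT X x₀) (mk x (min s t + rv)) +
          dist (mk x (min s t + rv) : StarT X x₀) (mk x t) = dist (mk x s : StarT X x₀) (mk x t)
        rw [hD, dist_mk_same x hs h1, dist_mk_same x h1 ht]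
        have h5 : min s t ≤ s := min_le_left s t
        have h6 : min s t ≤ t := min_le_right s t
        rcases abs_cases (s - (min s t + rv)) with ⟨e1,f1⟩|⟨e1,f1⟩ <;>
        rcases abs_cases (min s t + rv - t) with ⟨e2,f2⟩|⟨e2,f2⟩ <;>
        rcases abs_cases (s - t) with ⟨e3,f3⟩|⟨e3,f3⟩ <;> linarith
  · have hD : dist (mk x s : StarT X x₀) (mk y t) = s + t := dist_mk_ne hxy hs ht
    refine ⟨fun r => if r.1 < s then mk x (s - r.1) else mk y (r.1 - s), ?_, ?_⟩
    · rintro ⟨rv, hrv⟩ ⟨rv', hrv'⟩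
      have hr1 : (0:ℝ) ≤ rv := hrv.1
      have hr1' : (0:ℝ) ≤ rv' := hrv'.1
      show dist (if rv < s then mk x (s - rv) else mk y (rv - s) : StarT X x₀)
        (if rv' < s then mk x (s - rv') else mk y (rv' - s)) = |rv - rv'|
      split_ifs with h1 h2 h2
      · rw [dist_mk_same x (by linarith) (by linarith)]
        have he : s - rv - (s - rv') = rv' - rv := by ring
        rw [he, abs_sub_comm]
      · rw [dist_mk_ne hxy (by linarith) (by linarith [not_lt.1 h2])]
        rw [abs_sub_comm, abs_of_nonneg (by linarith [not_lt.1 h2])]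
        ring
      · rw [dist_mk_ne (fun h => hxy h.symm) (by linarith [not_lt.1 h1]) (by linarith)]
        rw [abs_of_nonneg (by linarith [not_lt.1 h1])]
        ring
      · rw [dist_mk_same y (by linarith [not_lt.1 h1]) (by linarith [not_lt.1 h2])]
        congr 1; ring
    · intro p
      simp only [MetricSegment, Set.mem_setOf_eq]
      constructor
      · intro hp
        obtain ⟨z, u, hu, hzu, rfl⟩ : ∃ z u, 0 ≤ u ∧ (u = 0 → z = x₀) ∧ mk z u = p :=
          ⟨p.1.1, p.1.2, p.2.1, p.2.2, mk_eta p⟩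
        rw [hD] at hp
        by_cases hzx : z = x
        · subst hzx
          rw [dist_mk_same z hs hu, dist_mk_ne (fun h => hxy (h : z = y)) hu ht] at hp
          have hus : u ≤ s := by
            rcases abs_cases (s - u) with ⟨e,f⟩|⟨e,f⟩ <;> linarith
          refine ⟨⟨s - u, Set.mem_Icc.2 ⟨by linarith, by rw [hD]; linarith⟩⟩, ?_⟩
          show (if s - u < s then mk z (s - (s - u)) else mk y (s - u - s) : StarT X x₀) = mk z u
          by_cases hup : 0 < u
          · rw [if_pos (by linarith)]
            have he : s - (s - u) = u := by ring
            rw [he]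
          · have hu0 : u = 0 := le_antisymm (not_lt.1 hup) hu
            subst hu0
            rw [if_neg (by simp)]
            have he : s - 0 - s = (0:ℝ) := by ring
            rw [he, mk_nonpos (by norm_num), mk_nonpos (by norm_num)]
        · by_cases hzy : z = y
          · subst hzy
            rw [dist_mk_ne hxy hs hu, dist_mk_same z hu ht] at hp
            have hut : u ≤ t := by
              rcases abs_cases (u - t) with ⟨e,f⟩|⟨e,f⟩ <;> linarith
            refine ⟨⟨s + u, Set.mem_Icc.2 ⟨by linarith, by rw [hD]; linarith⟩⟩, ?_⟩
            show (if s + u < s then mk x (s - (s + u)) else mk z (s + u - s) : StarT X x₀) = mk z u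
            rw [if_neg (by linarith)]
            have he : s + u - s = u := by ring
            rw [he]
          · have hxz : x ≠ z := fun h => hzx h.symm
            rw [dist_mk_ne hxz hs hu, dist_mk_ne hzy hu ht] at hp
            have hu0 : u = 0 := le_antisymm (by linarith) hu
            subst hu0
            refine ⟨⟨s, Set.mem_Icc.2 ⟨hs, by rw [hD]; linarith⟩⟩, ?_⟩
            show (if s < s then mk x (s - s) else mk y (s - s) : StarT X x₀) = mk z 0
            rw [if_neg (lt_irrefl s), sub_self]
            rw [mk_nonpos (by norm_num), mk_nonpos (by norm_num)]
      · rintro ⟨⟨rv, hrv⟩, rfl⟩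
        have hr1 : (0:ℝ) ≤ rv := hrv.1
        have hr2 : rv ≤ dist (mk x s : StarT X x₀) (mk y t) := hrv.2
        rw [hD] at hr2
        show dist (mk x s : StarT X x₀) (if rv < s then mk x (s - rv) else mk y (rv - s)) +
          dist (if rv < s then mk x (s - rv) else mk y (rv - s) : StarT X x₀) (mk y t) =
          dist (mk x s : StarT X x₀) (mk y t)
        rw [hD]
        by_cases h1 : rv < s
        · rw [if_pos h1, dist_mk_same x hs (by linarith),
            dist_mk_ne hxy (by linarith) ht]
          have he : s - (s - rv) = rv := by ring
          rw [he, abs_of_nonneg hr1]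
          ring
        · rw [if_neg h1, dist_mk_ne hxy hs (by linarith [not_lt.1 h1]),
            dist_mk_same y (by linarith [not_lt.1 h1]) ht]
          rw [abs_of_nonpos (by linarith)]
          ring

lemma rtree_one (a b : StarT X x₀) :
    Nonempty ((MetricSegment a b) ≃ᵢ (Set.Icc (0:ℝ) (dist a b))) := by
  obtain ⟨φ, hiso, hmem⟩ := exists_param a b
  exact nonempty_isom_of_param _ _ φ hiso hmem

lemma mem_segment {a b p : StarT X x₀} (h : dist a p + dist p b = dist a b) :
    p ∈ MetricSegment a b := h

lemma ne_of_dist_pos {a b : StarT X x₀} (h : 0 < dist a b) : a ≠ b := by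
  intro he; rw [he, dist_self] at h; exact lt_irrefl 0 h

lemma rtree_two (a b c : StarT X x₀)
    (hseg : MetricSegment a b ∩ MetricSegment b c = {b}) :
    dist a c = dist a b + dist b c := by
  refine le_antisymm (dist_triangle a b c) ?_
  by_contra hlt
  push_neg at hlt
  obtain ⟨xa, sa, hsa, hxa, rfl⟩ : ∃ x s, 0 ≤ s ∧ (s = 0 → x = x₀) ∧ mk x s = a :=
    ⟨a.1.1, a.1.2, a.2.1, a.2.2, mk_eta a⟩
  obtain ⟨xb, sb, hsb, hxb, rfl⟩ : ∃ x s, 0 ≤ s ∧ (s = 0 → x = x₀) ∧ mk x s = b :=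
    ⟨b.1.1, b.1.2, b.2.1, b.2.2, mk_eta b⟩
  obtain ⟨xc, sc, hsc, hxc, rfl⟩ : ∃ x s, 0 ≤ s ∧ (s = 0 → x = x₀) ∧ mk x s = c :=
    ⟨c.1.1, c.1.2, c.2.1, c.2.2, mk_eta c⟩
  have key : ∀ p : StarT X x₀, p ∈ MetricSegment (mk xa sa) (mk xb sb) →
      p ∈ MetricSegment (mk xb sb) (mk xc sc) → p ≠ mk xb sb → False := by
    intro p h1 h2 hne
    have : p ∈ ({mk xb sb} : Set (StarT X x₀)) := hseg ▸ Set.mem_inter h1 h2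
    exact hne this
  by_cases hab : xa = xb <;> by_cases hbc : xb = xc
  · -- all on one branch
    subst hab; subst hbc
    rw [dist_mk_same xa hsa hsc, dist_mk_same xa hsa hsb, dist_mk_same xa hsb hsc] at hlt
    rcases lt_or_ge (max sa sc) sb with hgt | hle
    · -- sb above: witness max sa sc
      have h5 : sa ≤ max sa sc := le_max_left _ _
      have h6 : sc ≤ max sa sc := le_max_right _ _
      have hm0 : (0:ℝ) ≤ max sa sc := le_trans hsa h5
      refine key (mk xa (max sa sc)) ?_ ?_ ?_
      · apply mem_segment
        rw [dist_mk_same xa hsa hm0, dist_mk_same xa hm0 hsb, dist_mk_same xa hsa hsb]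
        rcases abs_cases (sa - max sa sc) with ⟨e1,f1⟩|⟨e1,f1⟩ <;>
        rcases abs_cases (max sa sc - sb) with ⟨e2,f2⟩|⟨e2,f2⟩ <;>
        rcases abs_cases (sa - sb) with ⟨e3,f3⟩|⟨e3,f3⟩ <;> linarith
      · apply mem_segment
        rw [dist_mk_same xa hsb hm0, dist_mk_same xa hm0 hsc, dist_mk_same xa hsb hsc]
        rcases abs_cases (sb - max sa sc) with ⟨e1,f1⟩|⟨e1,f1⟩ <;>
        rcases abs_cases (max sa sc - sc) with ⟨e2,f2⟩|⟨e2,f2⟩ <;>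
        rcases abs_cases (sb - sc) with ⟨e3,f3⟩|⟨e3,f3⟩ <;> linarith
      · apply ne_of_dist_pos
        rw [dist_mk_same xa hm0 hsb]
        rcases abs_cases (max sa sc - sb) with ⟨e,f⟩|⟨e,f⟩ <;> linarith
    · rcases lt_or_ge sb (min sa sc) with hlt2 | hge
      · have h5 : min sa sc ≤ sa := min_le_left _ _
        have h6 : min sa sc ≤ sc := min_le_right _ _
        have hm0 : (0:ℝ) ≤ min sa sc := le_min hsa hsc
        refine key (mk xa (min sa sc)) ?_ ?_ ?_
        · apply mem_segment
          rw [dist_mk_same xa hsa hm0, dist_mk_same xa hm0 hsb, dist_mk_same xa hsa hsb]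
          rcases abs_cases (sa - min sa sc) with ⟨e1,f1⟩|⟨e1,f1⟩ <;>
          rcases abs_cases (min sa sc - sb) with ⟨e2,f2⟩|⟨e2,f2⟩ <;>
          rcases abs_cases (sa - sb) with ⟨e3,f3⟩|⟨e3,f3⟩ <;> linarith
        · apply mem_segment
          rw [dist_mk_same xa hsb hm0, dist_mk_same xa hm0 hsc, dist_mk_same xa hsb hsc]
          rcases abs_cases (sb - min sa sc) with ⟨e1,f1⟩|⟨e1,f1⟩ <;>
          rcases abs_cases (min sa sc - sc) with ⟨e2,f2⟩|⟨e2,f2⟩ <;>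
          rcases abs_cases (sb - sc) with ⟨e3,f3⟩|⟨e3,f3⟩ <;> linarith
        · apply ne_of_dist_pos
          rw [dist_mk_same xa hm0 hsb]
          rcases abs_cases (min sa sc - sb) with ⟨e,f⟩|⟨e,f⟩ <;> linarith
      · -- sb between: contradicts hlt
        rcases le_total sa sc with h10 | h10
        · rw [min_eq_left h10] at hge
          rw [max_eq_right h10] at hle
          rcases abs_cases (sa - sc) with ⟨e1,f1⟩|⟨e1,f1⟩ <;>
          rcases abs_cases (sa - sb) with ⟨e2,f2⟩|⟨e2,f2⟩ <;>
          rcases abs_cases (sb - sc) with ⟨e3,f3⟩|⟨e3,f3⟩ <;> linarith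
        · rw [min_eq_right h10] at hge
          rw [max_eq_left h10] at hle
          rcases abs_cases (sa - sc) with ⟨e1,f1⟩|⟨e1,f1⟩ <;>
          rcases abs_cases (sa - sb) with ⟨e2,f2⟩|⟨e2,f2⟩ <;>
          rcases abs_cases (sb - sc) with ⟨e3,f3⟩|⟨e3,f3⟩ <;> linarith
  · -- xa = xb ≠ xc : witness a
    subst hab
    rw [dist_mk_ne hbc hsa hsc, dist_mk_same xa hsa hsb, dist_mk_ne hbc hsb hsc] at hlt
    have hab2 : sa < sb := by
      rcases abs_cases (sa - sb) with ⟨e,f⟩|⟨e,f⟩ <;> linarith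
    refine key (mk xa sa) ?_ ?_ ?_
    · apply mem_segment
      rw [dist_self, zero_add]
    · apply mem_segment
      rw [dist_mk_same xa hsb hsa, dist_mk_ne hbc hsa hsc, dist_mk_ne hbc hsb hsc]
      rw [abs_of_nonneg (by linarith)]
      ring
    · apply ne_of_dist_pos
      rw [dist_mk_same xa hsa hsb]
      rcases abs_cases (sa - sb) with ⟨e,f⟩|⟨e,f⟩ <;> linarith
  · -- xa ≠ xb = xc : witness c
    subst hbc
    rw [dist_mk_ne hab hsa hsc, dist_mk_ne hab hsa hsb, dist_mk_same xb hsb hsc] at hlt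
    have hcb2 : sc < sb := by
      rcases abs_cases (sb - sc) with ⟨e,f⟩|⟨e,f⟩ <;> linarith
    refine key (mk xb sc) ?_ ?_ ?_
    · apply mem_segment
      rw [dist_mk_ne hab hsa hsc, dist_mk_same xb hsc hsb, dist_mk_ne hab hsa hsb]
      rw [abs_of_nonpos (by linarith)]
      ring
    · apply mem_segment
      rw [dist_mk_same xb hsb hsc, dist_self, add_zero]
    · apply ne_of_dist_pos
      rw [dist_mk_same xb hsc hsb]
      rcases abs_cases (sc - sb) with ⟨e,f⟩|⟨e,f⟩ <;> linarith
  · by_cases hac : xa = xc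
    · -- xa = xc ≠ xb : witness mk xa (min sa sc)
      subst hac
      have h5 : min sa sc ≤ sa := min_le_left _ _
      have h6 : min sa sc ≤ sc := min_le_right _ _
      have hm0 : (0:ℝ) ≤ min sa sc := le_min hsa hsc
      have hxab : xa ≠ xb := hab
      refine key (mk xa (min sa sc)) ?_ ?_ ?_
      · apply mem_segment
        rw [dist_mk_same xa hsa hm0, dist_mk_ne hxab hm0 hsb, dist_mk_ne hxab hsa hsb]
        rw [abs_of_nonneg (by linarith)]
        ring
      · apply mem_segment
        rw [dist_mk_ne (fun h => hxab h.symm) hsb hm0, dist_mk_same xa hm0 hsc,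
          dist_mk_ne (fun h => hxab h.symm) hsb hsc]
        rw [abs_of_nonpos (by linarith)]
        ring
      · apply ne_of_dist_pos
        rw [dist_mk_ne hxab hm0 hsb]
        rcases lt_or_ge 0 (min sa sc) with hm | hm
        · linarith
        · have hmz : min sa sc = 0 := le_antisymm hm hm0
          have hxa0 : xa = x₀ := by
            rcases le_total sa sc with hle | hle
            · exact hxa (by rw [← hmz]; exact (min_eq_left hle).symm)
            · exact hxc (by rw [← hmz]; exact (min_eq_right hle).symm)
          have hsb0 : sb ≠ 0 := fun h => hab (hxa0.trans (hxb h).symm)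
          linarith [lt_of_le_of_ne hsb (Ne.symm hsb0)]
    · -- all branches distinct : witness center
      rw [dist_mk_ne hac hsa hsc, dist_mk_ne hab hsa hsb, dist_mk_ne hbc hsb hsc] at hlt
      have hsbpos : 0 < sb := by linarith
      have hdc : ∀ (z : X) (v : ℝ), 0 ≤ v → dist (mk z v : StarT X x₀) center = v := by
        intro z v hv
        rw [dist_center, mk_snd hv]
      refine key center ?_ ?_ ?_
      · apply mem_segment
        rw [dist_mk_ne hab hsa hsb, hdc xa sa hsa,
          dist_comm center (mk xb sb), hdc xb sb hsb]
      · apply mem_segment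
        rw [dist_mk_ne hbc hsb hsc, dist_comm center (mk xc sc), hdc xc sc hsc,
          hdc xb sb hsb]
      · apply ne_of_dist_pos
        rw [dist_comm center (mk xb sb), hdc xb sb hsb]
        exact hsbpos

end StarT
end StarSec


/-- Every Lipschitz connected metric space is a 1-Lipschitz image of a complete
ℝ-tree. -/
theorem lipschitz_connected_image_of_rtree (X : Type) [MetricSpace X]
    (h : LipschitzConnected X) :
    ∃ (Y : Type) (_ : MetricSpace Y) (_ : CompleteSpace Y), IsRTree Y ∧
      ∃ γ : Y → X, Function.Surjective γ ∧ LipschitzWith 1 γ := by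
  rcases isEmpty_or_nonempty X with hX | hX
  · refine ⟨X, inferInstance, ⟨fun {f} hf => ?_⟩,
      ⟨fun x y => (hX.false x).elim, fun x y z _ => (hX.false x).elim⟩,
      id, Function.surjective_id, LipschitzWith.id⟩
    haveI := hf.1
    exact ((Filter.nonempty_of_neBot f).elim fun x => (hX.false x).elim)
  · obtain ⟨x₀⟩ := hX
    choose F hF h0 h1 using fun x => h x₀ x
    choose K hK using hF
    refine ⟨StarT X x₀, inferInstance, inferInstance,
      ⟨StarT.rtree_one, StarT.rtree_two⟩, ?_⟩
    set proj : ℝ → Set.Icc (0:ℝ) 1 := Set.projIcc 0 1 zero_le_one with hprojdef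
    have hprojval : ∀ u : ℝ, ((proj u : Set.Icc (0:ℝ) 1) : ℝ) = max 0 (min 1 u) := by
      intro u; simp [hprojdef, Set.projIcc]
    have hF0 : ∀ (z : X) (u : Set.Icc (0:ℝ) 1), (u : ℝ) = 0 → F z u = x₀ := by
      intro z u hu
      have : u = ⟨0, by norm_num⟩ := Subtype.ext hu
      rw [this, h0]
    have hF1 : ∀ (z : X) (u : Set.Icc (0:ℝ) 1), (u : ℝ) = 1 → F z u = z := by
      intro z u hu
      have : u = ⟨1, by norm_num⟩ := Subtype.ext hu
      rw [this, h1]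
    have hconst : ∀ (x : X), (K x : ℝ) = 0 → ∀ (a b : Set.Icc (0:ℝ) 1), F x a = F x b := by
      intro x hk a b
      have hd := (hK x).dist_le_mul a b
      rw [hk, zero_mul] at hd
      exact dist_le_zero.1 hd
    set γ : StarT X x₀ → X := fun p => F p.1.1 (proj (p.1.2 / (K p.1.1 : ℝ))) with hγ
    have hγmk : ∀ (x : X) (s : ℝ), 0 ≤ s →
        γ (StarT.mk x s) = F x (proj (s / (K x : ℝ))) := by
      intro x s hs
      rcases eq_or_lt_of_le hs with hzs | hzs
      · rw [← hzs, StarT.mk_nonpos (lt_irrefl 0)]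
        show F x₀ (proj ((0:ℝ) / (K x₀ : ℝ))) = F x (proj ((0:ℝ) / (K x : ℝ)))
        rw [zero_div, zero_div]
        rw [hF0 x₀ (proj 0) (by rw [hprojval]; norm_num),
          hF0 x (proj 0) (by rw [hprojval]; norm_num)]
      · have e1 : (StarT.mk x s : StarT X x₀).1.1 = x := StarT.mk_fst hzs
        have e2 : (StarT.mk x s : StarT X x₀).1.2 = s := StarT.mk_snd hs
        show F (StarT.mk x s : StarT X x₀).1.1
          (proj ((StarT.mk x s : StarT X x₀).1.2 / (K (StarT.mk x s : StarT X x₀).1.1 : ℝ)))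
          = F x (proj (s / (K x : ℝ)))
        rw [e1, e2]
    have klem : ∀ (x : X) (s t : ℝ),
        dist (F x (proj (s / (K x : ℝ)))) (F x (proj (t / (K x : ℝ)))) ≤ |s - t| := by
      intro x s t
      rcases eq_or_ne (K x : ℝ) 0 with hk | hk
      · rw [hconst x hk _ (proj (t / (K x : ℝ))), dist_self]
        exact abs_nonneg _
      · have hkpos : (0:ℝ) < (K x : ℝ) := lt_of_le_of_ne (K x).2 (Ne.symm hk)
        have hd := (hK x).dist_le_mul (proj (s / (K x : ℝ))) (proj (t / (K x : ℝ)))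
        have hpj := (LipschitzWith.projIcc (zero_le_one)).dist_le_mul
          (s / (K x : ℝ)) (t / (K x : ℝ))
        rw [NNReal.coe_one, one_mul] at hpj
        rw [← hprojdef] at hpj
        have hdd : dist (s / (K x : ℝ)) (t / (K x : ℝ)) = |s - t| / (K x : ℝ) := by
          rw [Real.dist_eq, div_sub_div_same, abs_div, abs_of_pos hkpos]
        calc dist (F x (proj (s / (K x : ℝ)))) (F x (proj (t / (K x : ℝ))))
            ≤ (K x : ℝ) * dist (proj (s / (K x : ℝ))) (proj (t / (K x : ℝ))) := hd
          _ ≤ (K x : ℝ) * (|s - t| / (K x : ℝ)) := by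
              apply mul_le_mul_of_nonneg_left _ (K x).2
              rw [← hdd]; exact hpj
          _ = |s - t| := mul_div_cancel₀ _ hk
    have klem2 : ∀ (x : X) (s : ℝ), 0 ≤ s →
        dist (F x (proj (s / (K x : ℝ)))) x₀ ≤ s := by
      intro x s hs
      have h00 : F x (proj ((0:ℝ) / (K x : ℝ))) = x₀ := by
        rw [zero_div]
        exact hF0 x (proj 0) (by rw [hprojval]; norm_num)
      calc dist (F x (proj (s / (K x : ℝ)))) x₀
          = dist (F x (proj (s / (K x : ℝ)))) (F x (proj ((0:ℝ) / (K x : ℝ)))) := by rw [h00]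
        _ ≤ |s - 0| := klem x s 0
        _ = s := by rw [sub_zero, abs_of_nonneg hs]
    refine ⟨γ, ?_, ?_⟩
    · intro x
      refine ⟨StarT.mk x (K x : ℝ), ?_⟩
      rw [hγmk x (K x : ℝ) (K x).2]
      rcases eq_or_ne (K x : ℝ) 0 with hk | hk
      · rw [hk, zero_div]
        rw [hF0 x (proj 0) (by rw [hprojval]; norm_num)]
        have := hconst x hk ⟨1, by norm_num⟩ ⟨0, by norm_num⟩
        rw [h1, h0] at this
        exact this.symm
      · rw [div_self hk]
        exact hF1 x (proj 1) (by rw [hprojval]; norm_num)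
    · apply LipschitzWith.of_dist_le_mul
      intro p q
      rw [NNReal.coe_one, one_mul]
      obtain ⟨x, s, hs, hsx, rfl⟩ : ∃ x s, 0 ≤ s ∧ (s = 0 → x = x₀) ∧ StarT.mk x s = p :=
        ⟨p.1.1, p.1.2, p.2.1, p.2.2, StarT.mk_eta p⟩
      obtain ⟨y, t, ht, hty, rfl⟩ : ∃ y t, 0 ≤ t ∧ (t = 0 → y = x₀) ∧ StarT.mk y t = q :=
        ⟨q.1.1, q.1.2, q.2.1, q.2.2, StarT.mk_eta q⟩
      rw [hγmk x s hs, hγmk y t ht]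
      by_cases hxy : x = y
      · subst hxy
        rw [StarT.dist_mk_same x hs ht]
        exact klem x s t
      · rw [StarT.dist_mk_ne hxy hs ht]
        calc dist (F x (proj (s / (K x : ℝ)))) (F y (proj (t / (K y : ℝ))))
            ≤ dist (F x (proj (s / (K x : ℝ)))) x₀ + dist x₀ (F y (proj (t / (K y : ℝ)))) :=
              dist_triangle _ _ _
          _ ≤ s + t := by
              apply add_le_add (klem2 x s hs)
              rw [dist_comm]
              exact klem2 y t ht
end
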